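/- arXiv:1001.2582 — 6 statements merged into one kernel-verified Lean document; each statement's English description precedes it below -/
import Mathlib

section
/- Let H be a finite set with |H| = N ≥ 4, let (X_t)_{t≥1} be i.i.d. random variables each uniformly distributed on H, and let c, a₁, a₂, a₃ ∈ H be four distinct elements. Then the expected time until either c first appears or all of a₁, a₂, a₃ have appeared satisfies E[min(τ_c, σ_{{a₁,a₂,a₃}})] = (3/4)·N. (This is the average decoding delay d^(2,4) of the first-to-complete scheme using alignment sets of sizes 2 and 4.) -/
open MeasureTheory ProbabilityTheory

/-- The collection time `σ_A`: the smallest time `t ≥ 1` such that every element of `A`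
has appeared among `X_1, …, X_t` (with the convention `sInf ∅ = 0`). -/
noncomputable def collectTime {Ω H : Type*} (X : ℕ → Ω → H) (A : Set H) (ω : Ω) : ℕ :=
  sInf {t : ℕ | ∀ a ∈ A, ∃ s, 1 ≤ s ∧ s ≤ t ∧ X s ω = a}

/-- The first hitting time `τ_c`: the first time `t ≥ 1` with `X_t = c`. -/
noncomputable def hitTime {Ω H : Type*} (X : ℕ → Ω → H) (c : H) (ω : Ω) : ℕ :=
  collectTime X {c} ω

set_option linter.unusedSectionVars false
set_option linter.unusedVariables false
set_option maxHeartbeats 1000000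

section helpers

variable {Ω H : Type*} [MeasurableSpace Ω] {μ₀ : Measure Ω}
variable [Fintype H] [MeasurableSpace H] [MeasurableSingletonClass H]
variable {X : ℕ → Ω → H}



lemma memS_mono {A : Set H} {ω : Ω} {u v : ℕ} (huv : u ≤ v)
    (h : ∀ a ∈ A, ∃ s, 1 ≤ s ∧ s ≤ u ∧ X s ω = a) :
    ∀ a ∈ A, ∃ s, 1 ≤ s ∧ s ≤ v ∧ X s ω = a :=
  fun a ha => (h a ha).imp fun s hs => ⟨hs.1, hs.2.1.trans huv, hs.2.2⟩

lemma lt_collectTime {A : Set H} {ω : Ω} {t : ℕ}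
    (hne : ∃ u, ∀ a ∈ A, ∃ s, 1 ≤ s ∧ s ≤ u ∧ X s ω = a)
    (hnot : ¬ ∀ a ∈ A, ∃ s, 1 ≤ s ∧ s ≤ t ∧ X s ω = a) :
    t < collectTime X A ω := by
  by_contra h
  push_neg at h
  exact hnot (memS_mono h (Nat.sInf_mem hne))

lemma not_memS_of_lt_collectTime {A : Set H} {ω : Ω} {t : ℕ}
    (h : t < collectTime X A ω) :
    ¬ ∀ a ∈ A, ∃ s, 1 ≤ s ∧ s ≤ t ∧ X s ω = a :=
  Nat.notMem_of_lt_sInf h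

lemma measurableSet_memS (hmeas : ∀ t, Measurable (X t)) {A : Set H} (hA : A.Finite) (t : ℕ) :
    MeasurableSet {ω | ∀ a ∈ A, ∃ s, 1 ≤ s ∧ s ≤ t ∧ X s ω = a} := by
  have : {ω | ∀ a ∈ A, ∃ s, 1 ≤ s ∧ s ≤ t ∧ X s ω = a}
      = ⋂ a ∈ A, ⋃ s ∈ Finset.Icc 1 t, X s ⁻¹' {a} := by
    ext ω
    simp only [Set.mem_setOf_eq, Set.mem_iInter, Set.mem_iUnion, Set.mem_preimage,
      Set.mem_singleton_iff, Finset.mem_Icc, exists_prop]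
    constructor
    · intro h a ha; obtain ⟨s, h1, h2, h3⟩ := h a ha; exact ⟨s, ⟨h1, h2⟩, h3⟩
    · intro h a ha; obtain ⟨s, ⟨h1, h2⟩, h3⟩ := h a ha; exact ⟨s, h1, h2, h3⟩
  rw [this]
  exact hA.measurableSet_biInter fun a _ =>
    MeasurableSet.biUnion (Finset.Icc 1 t).countable_toSet
      (fun s _ => (hmeas s) (measurableSet_singleton a))

lemma measurable_collectTime (hmeas : ∀ t, Measurable (X t)) {A : Set H} (hA : A.Finite) :
    Measurable (collectTime X A) := by
  apply measurable_to_countable'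
  intro n
  match n with
  | 0 =>
    have : collectTime X A ⁻¹' {0}
        = {ω | ∀ a ∈ A, ∃ s, 1 ≤ s ∧ s ≤ 0 ∧ X s ω = a}
          ∪ ⋂ t, {ω | ∀ a ∈ A, ∃ s, 1 ≤ s ∧ s ≤ t ∧ X s ω = a}ᶜ := by
      ext ω
      simp only [Set.mem_preimage, Set.mem_singleton_iff, collectTime, Nat.sInf_eq_zero,
        Set.mem_union, Set.mem_iInter, Set.mem_compl_iff, Set.mem_setOf_eq]
      constructor
      · rintro (h | h)
        · exact Or.inl h
        · exact Or.inr fun t ht => (Set.eq_empty_iff_forall_notMem.1 h t) ht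
      · rintro (h | h)
        · exact Or.inl h
        · exact Or.inr (Set.eq_empty_iff_forall_notMem.2 h)
    rw [this]
    exact ((measurableSet_memS hmeas hA 0).union
      (MeasurableSet.iInter fun t => (measurableSet_memS hmeas hA t).compl))
  | Nat.succ k =>
    have : collectTime X A ⁻¹' {k + 1}
        = {ω | ∀ a ∈ A, ∃ s, 1 ≤ s ∧ s ≤ k + 1 ∧ X s ω = a}
          ∩ {ω | ∀ a ∈ A, ∃ s, 1 ≤ s ∧ s ≤ k ∧ X s ω = a}ᶜ := by
      ext ω
      simp only [Set.mem_preimage, Set.mem_singleton_iff, Set.mem_inter_iff,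
        Set.mem_compl_iff, Set.mem_setOf_eq]
      constructor
      · intro h
        have hne : {t : ℕ | ∀ a ∈ A, ∃ s, 1 ≤ s ∧ s ≤ t ∧ X s ω = a}.Nonempty := by
          by_contra hempty
          rw [Set.not_nonempty_iff_eq_empty] at hempty
          simp [collectTime, hempty] at h
        have h1 := Nat.sInf_mem hne
        rw [collectTime] at h
        rw [h] at h1
        refine ⟨h1, ?_⟩
        have hk : k < sInf {t : ℕ | ∀ a ∈ A, ∃ s, 1 ≤ s ∧ s ≤ t ∧ X s ω = a} := by omega
        exact Nat.notMem_of_lt_sInf hk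
      · rintro ⟨h1, h2⟩
        have hle : collectTime X A ω ≤ k + 1 := Nat.sInf_le h1
        have hgt : k < collectTime X A ω :=
          lt_collectTime ⟨k + 1, h1⟩ h2
        omega
    rw [this]
    exact (measurableSet_memS hmeas hA (k+1)).inter (measurableSet_memS hmeas hA k).compl

end helpers

section prob

variable {Ω H : Type*} [MeasurableSpace Ω] (μ : Measure Ω) [IsProbabilityMeasure μ]
variable [Fintype H] [MeasurableSpace H] [MeasurableSingletonClass H]
variable {N : ℕ} {X : ℕ → Ω → H}

lemma avoid_prob (hcard : Fintype.card H = N)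
    (hmeas : ∀ t, Measurable (X t))
    (hindep : iIndepFun X μ)
    (hunif : ∀ t, ∀ c : H, μ {ω | X t ω = c} = (N : ENNReal)⁻¹)
    (B : Finset H) (t : ℕ) :
    μ {ω | ∀ s ∈ Finset.Icc 1 t, X s ω ∉ B} = (((N - B.card : ℕ) : ENNReal) / N) ^ t := by
  classical
  have hsingle : ∀ s : ℕ, μ (X s ⁻¹' (↑B)ᶜ) = ((N - B.card : ℕ) : ENNReal) / N := by
    intro s
    have hset : X s ⁻¹' (↑B)ᶜ = ⋃ b ∈ (Bᶜ : Finset H), X s ⁻¹' {b} := by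
      ext ω
      simp [Set.mem_preimage, Finset.mem_compl]
    rw [hset, measure_biUnion_finset]
    · have : ∀ b ∈ (Bᶜ : Finset H), μ (X s ⁻¹' {b}) = (N : ENNReal)⁻¹ := by
        intro b _
        have : X s ⁻¹' {b} = {ω | X s ω = b} := by ext ω; simp
        rw [this, hunif]
      rw [Finset.sum_congr rfl this, Finset.sum_const, Finset.card_compl, hcard,
        nsmul_eq_mul, div_eq_mul_inv]
    · intro b _ b' _ hbb'
      exact Set.disjoint_left.2 fun ω h1 h2 => hbb' (by
        simp only [Set.mem_preimage, Set.mem_singleton_iff] at h1 h2; rw [← h1, ← h2])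
    · exact fun b _ => (hmeas s) (measurableSet_singleton b)
  have hset2 : {ω | ∀ s ∈ Finset.Icc 1 t, X s ω ∉ B}
      = ⋂ s ∈ Finset.Icc 1 t, X s ⁻¹' (↑B)ᶜ := by
    ext ω; simp
  rw [hset2, hindep.meas_biInter (S := Finset.Icc 1 t)
    (s := fun s => X s ⁻¹' (↑B)ᶜ)
    (fun s _ => ⟨(↑B)ᶜ, (B.finite_toSet.measurableSet).compl, rfl⟩)]
  rw [Finset.prod_congr rfl fun s _ => hsingle s, Finset.prod_const, Nat.card_Icc]
  norm_num

lemma never_zero (hcard : Fintype.card H = N)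
    (hmeas : ∀ t, Measurable (X t))
    (hindep : iIndepFun X μ)
    (hunif : ∀ t, ∀ c : H, μ {ω | X t ω = c} = (N : ENNReal)⁻¹)
    (x : H) :
    μ {ω | ∀ s, 1 ≤ s → X s ω ≠ x} = 0 := by
  classical
  have hN1 : 1 ≤ N := hcard ▸ Fintype.card_pos_iff.2 ⟨x⟩
  have hbound : ∀ t : ℕ, μ {ω | ∀ s, 1 ≤ s → X s ω ≠ x}
      ≤ (((N - 1 : ℕ) : ENNReal) / N) ^ t := by
    intro t
    have hsub : {ω | ∀ s, 1 ≤ s → X s ω ≠ x}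
        ⊆ {ω | ∀ s ∈ Finset.Icc 1 t, X s ω ∉ ({x} : Finset H)} := by
      intro ω hω s hs
      rw [Finset.mem_Icc] at hs
      simp only [Finset.mem_singleton]
      exact hω s hs.1
    calc μ {ω | ∀ s, 1 ≤ s → X s ω ≠ x} ≤ _ := measure_mono hsub
      _ = (((N - 1 : ℕ) : ENNReal) / N) ^ t := by
          rw [avoid_prob μ hcard hmeas hindep hunif {x} t, Finset.card_singleton]
  have hr : ((N - 1 : ℕ) : ENNReal) / N < 1 := by
    have hNne : (N : ENNReal) ≠ 0 := Nat.cast_ne_zero.2 (by omega)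
    rw [ENNReal.div_lt_iff (Or.inl hNne) (Or.inl (ENNReal.natCast_ne_top N))]
    rw [one_mul]
    exact_mod_cast Nat.sub_lt hN1 one_pos
  have htend := ENNReal.tendsto_pow_atTop_nhds_zero_of_lt_one hr
  have := ge_of_tendsto' htend hbound
  simpa using this

lemma lintegral_nat_eq_tsum_gt {f : Ω → ℕ} (hf : Measurable f) :
    ∫⁻ ω, (f ω : ENNReal) ∂μ = ∑' t : ℕ, μ {ω | t < f ω} := by
  have key : ∀ ω, (f ω : ENNReal) = ∑' t : ℕ, Set.indicator {ω | t < f ω} (fun _ => 1) ω := by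
    intro ω
    rw [tsum_eq_sum (s := Finset.range (f ω)) (fun t ht => by
      simp only [Finset.mem_range, not_lt] at ht
      exact Set.indicator_of_notMem (by simpa using Nat.not_lt.2 ht) _)]
    rw [Finset.sum_congr rfl (fun t ht => Set.indicator_of_mem
      (by simpa using Finset.mem_range.1 ht) _)]
    simp
  calc ∫⁻ ω, (f ω : ENNReal) ∂μ
      = ∫⁻ ω, ∑' t : ℕ, Set.indicator {ω | t < f ω} (fun _ => 1) ω ∂μ := by
        congr 1; ext ω; exact key ω
    _ = ∑' t : ℕ, ∫⁻ ω, Set.indicator {ω | t < f ω} (fun _ => 1) ω ∂μ := by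
        refine lintegral_tsum fun t => ?_
        have hms : MeasurableSet {ω | t < f ω} := hf measurableSet_Ioi
        exact ((measurable_const.indicator hms).aemeasurable)
    _ = ∑' t : ℕ, μ {ω | t < f ω} := by
        refine tsum_congr fun t => ?_
        have hms : MeasurableSet {ω | t < f ω} := hf measurableSet_Ioi
        rw [lintegral_indicator hms]
        simp

lemma incl_excl3 {u v w : Set Ω} (hu : MeasurableSet u) (hv : MeasurableSet v)
    (hw : MeasurableSet w) :
    μ (u ∪ v ∪ w) + (μ (u ∩ v) + μ (u ∩ w) + μ (v ∩ w))
      = μ u + μ v + μ w + μ (u ∩ v ∩ w) := by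
  have fin : ∀ s : Set Ω, μ s ≠ ⊤ := fun s => measure_ne_top μ s
  have h1 : μ (u ∪ v ∪ w) + μ ((u ∪ v) ∩ w) = μ (u ∪ v) + μ w :=
    measure_union_add_inter _ hw
  have h2 : μ (u ∪ v) + μ (u ∩ v) = μ u + μ v := measure_union_add_inter _ hv
  have h3 : μ ((u ∩ w) ∪ (v ∩ w)) + μ ((u ∩ w) ∩ (v ∩ w)) = μ (u ∩ w) + μ (v ∩ w) :=
    measure_union_add_inter _ (hv.inter hw)
  rw [Set.union_inter_distrib_right] at h1
  have e1 : (u ∩ w) ∩ (v ∩ w) = u ∩ v ∩ w := by ext x; simp; tauto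
  rw [e1] at h3
  have key : μ (u ∪ v ∪ w) + (μ (u ∩ v) + μ (u ∩ w) + μ (v ∩ w))
      = (μ (u ∪ v ∪ w) + μ ((u ∩ w) ∪ (v ∩ w))) + μ (u ∩ v) + μ (u ∩ v ∩ w) := by
    rw [show μ (u ∩ v) + μ (u ∩ w) + μ (v ∩ w)
        = μ (u ∩ v) + (μ (u ∩ w) + μ (v ∩ w)) from by ring, ← h3]
    ring
  rw [key, h1, ← h2]; ring


lemma measurableSet_avoid (hmeas : ∀ t, Measurable (X t)) (B : Finset H) (t : ℕ) :
    MeasurableSet {ω | ∀ s ∈ Finset.Icc 1 t, X s ω ∉ B} := by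
  have : {ω | ∀ s ∈ Finset.Icc 1 t, X s ω ∉ B}
      = ⋂ s ∈ Finset.Icc 1 t, X s ⁻¹' (↑B)ᶜ := by ext ω; simp
  rw [this]
  exact MeasurableSet.biInter (Finset.Icc 1 t).countable_toSet
    fun s _ => (hmeas s) (B.finite_toSet.measurableSet.compl)

lemma measure_gt_key (hN : 4 ≤ N) (hcard : Fintype.card H = N)
    (hmeas : ∀ t, Measurable (X t))
    (hindep : iIndepFun X μ)
    (hunif : ∀ t, ∀ c : H, μ {ω | X t ω = c} = (N : ENNReal)⁻¹)
    (c a₁ a₂ a₃ : H)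
    (h₁₂ : a₁ ≠ a₂) (h₁₃ : a₁ ≠ a₃) (h₂₃ : a₂ ≠ a₃)
    (hc₁ : c ≠ a₁) (hc₂ : c ≠ a₂) (hc₃ : c ≠ a₃) (t : ℕ) :
    μ {ω | t < min (hitTime X c ω) (collectTime X {a₁, a₂, a₃} ω)}
        + 3 * (((N - 3 : ℕ) : ENNReal) / N) ^ t
      = 3 * (((N - 2 : ℕ) : ENNReal) / N) ^ t + (((N - 4 : ℕ) : ENNReal) / N) ^ t := by
  classical
  set Av : Finset H → Set Ω := fun B => {ω | ∀ s ∈ Finset.Icc 1 t, X s ω ∉ B} with hAv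
  set u : Set Ω := Av {c, a₁} with hu
  set v : Set Ω := Av {c, a₂} with hv
  set w : Set Ω := Av {c, a₃} with hw
  have hmu : ∀ B : Finset H, MeasurableSet (Av B) := fun B => measurableSet_avoid hmeas B t
  -- the "never hit" null set
  set Nev : Set Ω := {ω | ∀ s, 1 ≤ s → X s ω ≠ c} ∪ {ω | ∀ s, 1 ≤ s → X s ω ≠ a₁}
      ∪ {ω | ∀ s, 1 ≤ s → X s ω ≠ a₂} ∪ {ω | ∀ s, 1 ≤ s → X s ω ≠ a₃} with hNev
  have hNev0 : μ Nev = 0 := by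
    rw [hNev]
    refine measure_union_null (measure_union_null (measure_union_null ?_ ?_) ?_) ?_ <;>
      exact never_zero μ hcard hmeas hindep hunif _
  -- Step 1 : {t < T} ⊆ u ∪ v ∪ w
  have step1 : {ω | t < min (hitTime X c ω) (collectTime X {a₁, a₂, a₃} ω)} ⊆ u ∪ v ∪ w := by
    intro ω hω
    simp only [Set.mem_setOf_eq, lt_min_iff] at hω
    obtain ⟨hhit, hcol⟩ := hω
    have hc' : ∀ s ∈ Finset.Icc 1 t, X s ω ≠ c := by
      have := not_memS_of_lt_collectTime (A := {c}) hhit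
      intro s hs hXs
      rw [Finset.mem_Icc] at hs
      exact this fun a ha => ⟨s, hs.1, hs.2, by rw [hXs]; exact (Set.mem_singleton_iff.1 ha).symm ▸ rfl⟩
    have hA' := not_memS_of_lt_collectTime (A := {a₁, a₂, a₃}) hcol
    push_neg at hA'
    obtain ⟨a, ha, hmiss⟩ := hA'
    have hmiss' : ∀ s ∈ Finset.Icc 1 t, X s ω ≠ a := by
      intro s hs hXs
      rw [Finset.mem_Icc] at hs
      exact hmiss s hs.1 hs.2 hXs
    have mem : ∀ x : H, (∀ s ∈ Finset.Icc 1 t, X s ω ≠ x) → ω ∈ Av {c, x} := by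
      intro x hx
      show ∀ s ∈ Finset.Icc 1 t, X s ω ∉ ({c, x} : Finset H)
      intro s hs
      simp only [Finset.mem_insert, Finset.mem_singleton, not_or]
      exact ⟨hc' s hs, hx s hs⟩
    simp only [Set.mem_insert_iff, Set.mem_singleton_iff] at ha
    rcases ha with rfl | rfl | rfl
    · exact Or.inl (Or.inl (mem _ hmiss'))
    · exact Or.inl (Or.inr (mem _ hmiss'))
    · exact Or.inr (mem _ hmiss')
  -- Step 2 : u ∪ v ∪ w ⊆ {t < T} ∪ Nev
  have step2 : u ∪ v ∪ w
      ⊆ {ω | t < min (hitTime X c ω) (collectTime X {a₁, a₂, a₃} ω)} ∪ Nev := by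
    intro ω hω
    by_cases hnev : ω ∈ Nev
    · exact Or.inr hnev
    · left
      simp only [hNev, Set.mem_union, Set.mem_setOf_eq, not_or, not_forall] at hnev
      push_neg at hnev
      obtain ⟨⟨⟨⟨sc, hsc1, hsc2⟩, ⟨s1, hs11, hs12⟩⟩, ⟨s2, hs21, hs22⟩⟩, ⟨s3, hs31, hs32⟩⟩ := hnev
      have havoidc : ∀ s ∈ Finset.Icc 1 t, X s ω ≠ c := by
        rcases hω with (h | h) | h <;>
        · intro s hs
          have := h s hs
          simp only [Finset.mem_insert, Finset.mem_singleton, not_or] at this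
          exact this.1
      have hhit : t < hitTime X c ω := by
        rw [hitTime]
        refine lt_collectTime ⟨sc, ?_⟩ ?_
        · intro a ha
          rw [Set.mem_singleton_iff] at ha
          exact ⟨sc, hsc1, le_refl _, ha ▸ hsc2⟩
        · intro hall
          obtain ⟨s, h1, h2, h3⟩ := hall c rfl
          exact havoidc s (Finset.mem_Icc.2 ⟨h1, h2⟩) h3
      have hcol : t < collectTime X {a₁, a₂, a₃} ω := by
        refine lt_collectTime ⟨max s1 (max s2 s3), ?_⟩ ?_
        · intro a ha
          simp only [Set.mem_insert_iff, Set.mem_singleton_iff] at ha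
          rcases ha with rfl | rfl | rfl
          · exact ⟨s1, hs11, le_max_left _ _, hs12⟩
          · exact ⟨s2, hs21, (le_max_left _ _).trans (le_max_right _ _), hs22⟩
          · exact ⟨s3, hs31, (le_max_right _ _).trans (le_max_right _ _), hs32⟩
        · intro hall
          rcases hω with (h | h) | h
          · obtain ⟨s, h1, h2, h3⟩ := hall a₁ (by simp)
            have := h s (Finset.mem_Icc.2 ⟨h1, h2⟩)
            simp [h3] at this
          · obtain ⟨s, h1, h2, h3⟩ := hall a₂ (by simp)
            have := h s (Finset.mem_Icc.2 ⟨h1, h2⟩)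
            simp [h3] at this
          · obtain ⟨s, h1, h2, h3⟩ := hall a₃ (by simp)
            have := h s (Finset.mem_Icc.2 ⟨h1, h2⟩)
            simp [h3] at this
      exact Set.mem_setOf_eq ▸ lt_min_iff.2 ⟨hhit, hcol⟩
  -- measure equality
  have hmeq : μ {ω | t < min (hitTime X c ω) (collectTime X {a₁, a₂, a₃} ω)} = μ (u ∪ v ∪ w) := by
    refine le_antisymm (measure_mono step1) ?_
    calc μ (u ∪ v ∪ w) ≤ μ ({ω | t < min (hitTime X c ω) (collectTime X {a₁, a₂, a₃} ω)} ∪ Nev) :=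
          measure_mono step2
      _ ≤ μ {ω | t < min (hitTime X c ω) (collectTime X {a₁, a₂, a₃} ω)} + μ Nev :=
          measure_union_le _ _
      _ = μ {ω | t < min (hitTime X c ω) (collectTime X {a₁, a₂, a₃} ω)} := by
          rw [hNev0, add_zero]
  -- intersections are avoid events
  have hinter : ∀ B C : Finset H, Av B ∩ Av C = Av (B ∪ C) := by
    intro B C
    ext ω
    simp only [hAv, Set.mem_inter_iff, Set.mem_setOf_eq, Finset.mem_union]
    constructor
    · rintro ⟨h1, h2⟩ s hs
      push_neg
      exact ⟨h1 s hs, h2 s hs⟩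
    · intro h
      constructor <;> intro s hs <;> have := h s hs <;> push_neg at this
      · exact this.1
      · exact this.2
  -- the cards
  have hcard2 : ∀ x : H, c ≠ x → ({c, x} : Finset H).card = 2 := by
    intro x hx
    rw [Finset.card_insert_of_notMem (by simp [hx]), Finset.card_singleton]
  have q := fun B => avoid_prob μ hcard hmeas hindep hunif B t
  have hmu_u : μ u = (((N - 2 : ℕ) : ENNReal) / N) ^ t := by
    rw [hu, hAv]; rw [q {c, a₁}, hcard2 a₁ hc₁]
  have hmu_v : μ v = (((N - 2 : ℕ) : ENNReal) / N) ^ t := by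
    rw [hv, hAv]; rw [q {c, a₂}, hcard2 a₂ hc₂]
  have hmu_w : μ w = (((N - 2 : ℕ) : ENNReal) / N) ^ t := by
    rw [hw, hAv]; rw [q {c, a₃}, hcard2 a₃ hc₃]
  have hmu_uv : μ (u ∩ v) = (((N - 3 : ℕ) : ENNReal) / N) ^ t := by
    rw [hu, hv, hinter]
    have : ({c, a₁} ∪ {c, a₂} : Finset H) = {c, a₁, a₂} := by
      ext x; simp [Finset.mem_union, Finset.mem_insert]
    rw [this, q]
    have : ({c, a₁, a₂} : Finset H).card = 3 := by
      rw [Finset.card_insert_of_notMem (by simp [hc₁, hc₂]),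
        Finset.card_insert_of_notMem (by simp [h₁₂]), Finset.card_singleton]
    rw [this]
  have hmu_uw : μ (u ∩ w) = (((N - 3 : ℕ) : ENNReal) / N) ^ t := by
    rw [hu, hw, hinter]
    have : ({c, a₁} ∪ {c, a₃} : Finset H) = {c, a₁, a₃} := by
      ext x; simp [Finset.mem_union, Finset.mem_insert]
    rw [this, q]
    have : ({c, a₁, a₃} : Finset H).card = 3 := by
      rw [Finset.card_insert_of_notMem (by simp [hc₁, hc₃]),
        Finset.card_insert_of_notMem (by simp [h₁₃]), Finset.card_singleton]
    rw [this]
  have hmu_vw : μ (v ∩ w) = (((N - 3 : ℕ) : ENNReal) / N) ^ t := by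
    rw [hv, hw, hinter]
    have : ({c, a₂} ∪ {c, a₃} : Finset H) = {c, a₂, a₃} := by
      ext x; simp [Finset.mem_union, Finset.mem_insert]
    rw [this, q]
    have : ({c, a₂, a₃} : Finset H).card = 3 := by
      rw [Finset.card_insert_of_notMem (by simp [hc₂, hc₃]),
        Finset.card_insert_of_notMem (by simp [h₂₃]), Finset.card_singleton]
    rw [this]
  have hmu_uvw : μ (u ∩ v ∩ w) = (((N - 4 : ℕ) : ENNReal) / N) ^ t := by
    rw [hu, hv, hw, hinter, hinter]
    have : (({c, a₁} ∪ {c, a₂}) ∪ {c, a₃} : Finset H) = {c, a₁, a₂, a₃} := by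
      ext x; simp [Finset.mem_union, Finset.mem_insert]
    rw [this, q]
    have : ({c, a₁, a₂, a₃} : Finset H).card = 4 := by
      rw [Finset.card_insert_of_notMem (by simp [hc₁, hc₂, hc₃]),
        Finset.card_insert_of_notMem (by simp [h₁₂, h₁₃]),
        Finset.card_insert_of_notMem (by simp [h₂₃]), Finset.card_singleton]
    rw [this]
  have hie := incl_excl3 μ (hmu {c, a₁}) (hmu {c, a₂}) (hmu {c, a₃})
  rw [hmu_uv, hmu_uw, hmu_vw, hmu_u, hmu_v, hmu_w, hmu_uvw] at hie
  calc μ {ω | t < min (hitTime X c ω) (collectTime X {a₁, a₂, a₃} ω)}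
        + 3 * (((N - 3 : ℕ) : ENNReal) / N) ^ t
      = μ (u ∪ v ∪ w) + ((((N - 3 : ℕ) : ENNReal) / N) ^ t + (((N - 3 : ℕ) : ENNReal) / N) ^ t
          + (((N - 3 : ℕ) : ENNReal) / N) ^ t) := by rw [hmeq]; ring
    _ = (((N - 2 : ℕ) : ENNReal) / N) ^ t + (((N - 2 : ℕ) : ENNReal) / N) ^ t
          + (((N - 2 : ℕ) : ENNReal) / N) ^ t + (((N - 4 : ℕ) : ENNReal) / N) ^ t := hie
    _ = 3 * (((N - 2 : ℕ) : ENNReal) / N) ^ t + (((N - 4 : ℕ) : ENNReal) / N) ^ t := by ring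

end prob

lemma measurable_min_nat {Ω : Type*} [MeasurableSpace Ω] {f g : Ω → ℕ}
    (hf : Measurable f) (hg : Measurable g) :
    Measurable fun ω => min (f ω) (g ω) := by
  apply measurable_to_countable'
  intro n
  have : (fun ω => min (f ω) (g ω)) ⁻¹' {n}
      = (f ⁻¹' {n} ∩ g ⁻¹' Set.Ici n) ∪ (g ⁻¹' {n} ∩ f ⁻¹' Set.Ici n) := by
    ext ω
    simp only [Set.mem_preimage, Set.mem_singleton_iff, Set.mem_union, Set.mem_inter_iff,
      Set.mem_Ici]
    omega
  rw [this]
  exact ((hf (measurableSet_singleton n)).inter (hg measurableSet_Ici)).union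
    ((hg (measurableSet_singleton n)).inter (hf measurableSet_Ici))

/-- For i.i.d. uniform draws from a finite set `H` of size `N ≥ 4` and four distinct
elements `c, a₁, a₂, a₃ ∈ H`, the expected time until either `c` first appears or all
of `a₁, a₂, a₃` have appeared is `(3/4)·N`.  This is the average decoding delay
`d^(2,4)` of the first-to-complete scheme with alignment sets of sizes 2 and 4. -/
theorem expected_delay_first_to_complete_2_4
    {Ω : Type*} [MeasurableSpace Ω] (μ : Measure Ω) [IsProbabilityMeasure μ]
    {H : Type*} [Fintype H] [MeasurableSpace H] [MeasurableSingletonClass H]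
    (N : ℕ) (hN : 4 ≤ N) (hcard : Fintype.card H = N)
    (X : ℕ → Ω → H) (hmeas : ∀ t, Measurable (X t))
    (hindep : iIndepFun X μ)
    (hunif : ∀ t, ∀ c : H, μ {ω | X t ω = c} = (N : ENNReal)⁻¹)
    (c a₁ a₂ a₃ : H)
    (h₁₂ : a₁ ≠ a₂) (h₁₃ : a₁ ≠ a₃) (h₂₃ : a₂ ≠ a₃)
    (hc₁ : c ≠ a₁) (hc₂ : c ≠ a₂) (hc₃ : c ≠ a₃) :
    ∫ ω, (min (hitTime X c ω) (collectTime X {a₁, a₂, a₃} ω) : ℝ) ∂μ = (3 / 4) * N := by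
  classical
  simp_rw [← Nat.cast_min]
  have hNpos : 0 < N := by omega
  have hN0 : (N : ENNReal) ≠ 0 := Nat.cast_ne_zero.2 hNpos.ne'
  have hNtop : (N : ENNReal) ≠ ⊤ := ENNReal.natCast_ne_top N
  have hTmeas : Measurable (fun ω => min (hitTime X c ω) (collectTime X {a₁, a₂, a₃} ω)) := by
    refine measurable_min_nat ?_ ?_
    · exact measurable_collectTime hmeas (Set.finite_singleton c)
    · exact measurable_collectTime hmeas
        ((Set.finite_singleton a₃).insert a₂ |>.insert a₁)
  -- pass to the lintegral
  have hnn : 0 ≤ᵐ[μ] fun ω => ((min (hitTime X c ω) (collectTime X {a₁, a₂, a₃} ω) : ℕ) : ℝ) :=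
    Filter.Eventually.of_forall fun ω => by positivity
  have hsm : AEStronglyMeasurable
      (fun ω => ((min (hitTime X c ω) (collectTime X {a₁, a₂, a₃} ω) : ℕ) : ℝ)) μ :=
    (Measurable.comp measurable_from_top hTmeas).aestronglyMeasurable
  rw [integral_eq_lintegral_of_nonneg_ae hnn hsm]
  have : ∀ ω, ENNReal.ofReal ((min (hitTime X c ω) (collectTime X {a₁, a₂, a₃} ω) : ℕ) : ℝ)
      = ((min (hitTime X c ω) (collectTime X {a₁, a₂, a₃} ω) : ℕ) : ENNReal) := fun ω =>
    ENNReal.ofReal_natCast _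
  simp_rw [this]
  rw [lintegral_nat_eq_tsum_gt μ hTmeas]
  -- sum the per-time identity
  have hkey := measure_gt_key μ hN hcard hmeas hindep hunif c a₁ a₂ a₃ h₁₂ h₁₃ h₂₃ hc₁ hc₂ hc₃
  have hsum : (∑' t : ℕ, (μ {ω | t < min (hitTime X c ω) (collectTime X {a₁, a₂, a₃} ω)}
        + 3 * (((N - 3 : ℕ) : ENNReal) / N) ^ t))
      = ∑' t : ℕ, (3 * (((N - 2 : ℕ) : ENNReal) / N) ^ t + (((N - 4 : ℕ) : ENNReal) / N) ^ t) :=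
    tsum_congr fun t => hkey t
  rw [ENNReal.tsum_add, ENNReal.tsum_add, ENNReal.tsum_mul_left, ENNReal.tsum_mul_left,
    ENNReal.tsum_geometric, ENNReal.tsum_geometric, ENNReal.tsum_geometric] at hsum
  have hq : ∀ k : ℕ, k ≤ N → (1 - ((N - k : ℕ) : ENNReal) / N)⁻¹ = (N : ENNReal) / k := by
    intro k hk
    have h1 : (1 : ENNReal) = (k : ENNReal) / N + ((N - k : ℕ) : ENNReal) / N := by
      rw [ENNReal.div_add_div_same]
      have : (k : ENNReal) + ((N - k : ℕ) : ENNReal) = (N : ENNReal) := by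
        rw [← Nat.cast_add]
        congr 1
        omega
      rw [this, ENNReal.div_self hN0 hNtop]
    have h2 : (1 : ENNReal) - ((N - k : ℕ) : ENNReal) / N = (k : ENNReal) / N := by
      refine ENNReal.sub_eq_of_eq_add ?_ h1
      exact (ENNReal.div_lt_top (ENNReal.natCast_ne_top _) hN0).ne
    rw [h2, ENNReal.inv_div (Or.inl hNtop) (Or.inl hN0)]
  rw [hq 3 (by omega), hq 2 (by omega), hq 4 (by omega)] at hsum
  simp only [Nat.cast_ofNat] at hsum
  -- finiteness
  set S := ∑' t : ℕ, μ {ω | t < min (hitTime X c ω) (collectTime X {a₁, a₂, a₃} ω)} with hS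
  have hfin : ∀ k : ℕ, k ≠ 0 → ((N : ENNReal) / k) ≠ ⊤ := by
    intro k hk
    exact (ENNReal.div_lt_top hNtop (Nat.cast_ne_zero.2 hk)).ne
  have hrhs_fin : 3 * ((N : ENNReal) / 2) + (N : ENNReal) / 4 ≠ ⊤ := by
    refine ENNReal.add_ne_top.2 ⟨?_, hfin 4 (by norm_num)⟩
    exact ENNReal.mul_ne_top (by norm_num) (by exact_mod_cast hfin 2 (by norm_num))
  have hSfin : S ≠ ⊤ := by
    intro hTop
    rw [hTop, top_add] at hsum
    exact hrhs_fin hsum.symm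
  -- take toReal
  have h3fin : (3 : ENNReal) * ((N : ENNReal) / 3) ≠ ⊤ :=
    ENNReal.mul_ne_top (by norm_num) (by exact_mod_cast hfin 3 (by norm_num))
  have htr := congrArg ENNReal.toReal hsum
  rw [ENNReal.toReal_add hSfin h3fin,
    ENNReal.toReal_add (ENNReal.mul_ne_top (by norm_num) (by exact_mod_cast hfin 2 (by norm_num)))
      (by exact_mod_cast hfin 4 (by norm_num))] at htr
  simp only [ENNReal.toReal_mul, ENNReal.toReal_div, ENNReal.toReal_natCast,
    ENNReal.toReal_ofNat] at htr
  have hNR : (4 : ℝ) ≤ (N : ℝ) := by exact_mod_cast hN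
  norm_num at htr ⊢
  linarith
end

section
/- Let H be a finite set with |H| = N ≥ 4, let (X_t)_{t≥1} be i.i.d. uniform draws from H, let c, a₁, a₂, a₃ ∈ H be four distinct elements, and let B be a Bernoulli(α) random variable (0 ≤ α ≤ 1) independent of (X_t). Define the time-sharing delay D = min(τ_c, σ_{{a₁,a₂,a₃}}) if B = 1, and D = τ_c if B = 0. Then E[D] = (1 − α)·N + α·(3/4)·N = (1 − α/4)·N. -/
open MeasureTheory ProbabilityTheory
open scoped ENNReal

set_option linter.unusedSectionVars false
set_option maxHeartbeats 1000000

namespace TimeShareAux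

section Basic

variable {Ω H : Type*}

/-- The set of times by which everything in `A` has appeared. -/
def appSet (X : ℕ → Ω → H) (A : Set H) (ω : Ω) : Set ℕ :=
  {t : ℕ | ∀ a ∈ A, ∃ s, 1 ≤ s ∧ s ≤ t ∧ X s ω = a}

lemma collectTime_eq (X : ℕ → Ω → H) (A : Set H) (ω : Ω) :
    collectTime X A ω = sInf (appSet X A ω) := rfl

lemma appSet_mono {X : ℕ → Ω → H} {A : Set H} {ω : Ω} {t t' : ℕ}
    (h : t ∈ appSet X A ω) (htt : t ≤ t') : t' ∈ appSet X A ω := by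
  intro a ha
  obtain ⟨s, h1, h2, h3⟩ := h a ha
  exact ⟨s, h1, h2.trans htt, h3⟩

lemma lt_collectTime_iff {X : ℕ → Ω → H} {A : Set H} {ω : Ω} {n : ℕ} :
    n < collectTime X A ω ↔ n ∉ appSet X A ω ∧ (appSet X A ω).Nonempty := by
  rw [collectTime_eq]
  constructor
  · intro h
    have hne : (appSet X A ω).Nonempty := by
      by_contra hempty
      rw [Set.not_nonempty_iff_eq_empty] at hempty
      rw [hempty, Nat.sInf_empty] at h
      omega
    exact ⟨fun hmem => absurd (Nat.sInf_le hmem) (not_le.2 h), hne⟩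
  · rintro ⟨hn, hne⟩
    by_contra hle
    push_neg at hle
    exact hn (appSet_mono (Nat.sInf_mem hne) hle)

lemma mem_appSet_singleton_iff {X : ℕ → Ω → H} {c : H} {ω : Ω} {n : ℕ} :
    n ∈ appSet X {c} ω ↔ ∃ s, 1 ≤ s ∧ s ≤ n ∧ X s ω = c := by
  simp [appSet]

lemma mem_appSet_triple_iff {X : ℕ → Ω → H} {a₁ a₂ a₃ : H} {ω : Ω} {n : ℕ} :
    n ∈ appSet X {a₁, a₂, a₃} ω ↔
      n ∈ appSet X {a₁} ω ∧ n ∈ appSet X {a₂} ω ∧ n ∈ appSet X {a₃} ω := by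
  simp [appSet]

lemma appSet_triple_empty_subset (X : ℕ → Ω → H) (a₁ a₂ a₃ : H) :
    {ω | appSet X {a₁, a₂, a₃} ω = ∅} ⊆
      {ω | appSet X {a₁} ω = ∅} ∪ {ω | appSet X {a₂} ω = ∅} ∪ {ω | appSet X {a₃} ω = ∅} := by
  intro ω hω
  simp only [Set.mem_setOf_eq] at hω
  simp only [Set.mem_union, Set.mem_setOf_eq]
  by_contra hcon
  push_neg at hcon
  obtain ⟨⟨h1, h2⟩, h3⟩ := hcon
  obtain ⟨t₁, ht₁⟩ := h1
  obtain ⟨t₂, ht₂⟩ := h2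
  obtain ⟨t₃, ht₃⟩ := h3
  have hmem : max t₁ (max t₂ t₃) ∈ appSet X {a₁, a₂, a₃} ω := by
    rw [mem_appSet_triple_iff]
    refine ⟨appSet_mono ht₁ (le_max_left _ _), ?_, ?_⟩
    · exact appSet_mono ht₂ ((le_max_left _ _).trans (le_max_right _ _))
    · exact appSet_mono ht₃ ((le_max_right _ _).trans (le_max_right _ _))
  rw [hω] at hmem
  exact hmem

end Basic

section Meas

variable {Ω H : Type*} [MeasurableSpace Ω] [MeasurableSpace H] [MeasurableSingletonClass H]
  [Countable H]

lemma measurableSet_mem_appSet (X : ℕ → Ω → H) (hX : ∀ t, Measurable (X t))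
    (A : Set H) (n : ℕ) : MeasurableSet {ω | n ∈ appSet X A ω} := by
  have h : {ω | n ∈ appSet X A ω} =
      ⋂ a ∈ A, ⋃ s ∈ Set.Icc 1 n, {ω | X s ω = a} := by
    ext ω
    simp [appSet, Set.mem_Icc, and_assoc]
  rw [h]
  exact MeasurableSet.biInter (Set.to_countable A) fun a _ =>
    MeasurableSet.biUnion (Set.to_countable _) fun s _ =>
      hX s (measurableSet_singleton a)

lemma measurableSet_appSet_empty (X : ℕ → Ω → H) (hX : ∀ t, Measurable (X t))
    (A : Set H) : MeasurableSet {ω | appSet X A ω = ∅} := by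
  have h : {ω | appSet X A ω = ∅} = ⋂ n : ℕ, {ω | n ∈ appSet X A ω}ᶜ := by
    ext ω
    simp [Set.eq_empty_iff_forall_notMem]
  rw [h]
  exact MeasurableSet.iInter fun n => (measurableSet_mem_appSet X hX A n).compl

lemma collectTime_le_iff {X : ℕ → Ω → H} {A : Set H} {ω : Ω} {n : ℕ} :
    collectTime X A ω ≤ n ↔ n ∈ appSet X A ω ∨ appSet X A ω = ∅ := by
  rw [collectTime_eq]
  constructor
  · intro h
    rcases Set.eq_empty_or_nonempty (appSet X A ω) with he | hne
    · exact Or.inr he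
    · exact Or.inl (appSet_mono (Nat.sInf_mem hne) h)
  · rintro (h | h)
    · exact Nat.sInf_le h
    · simp [h]

lemma measurableSet_collectTime_le (X : ℕ → Ω → H) (hX : ∀ t, Measurable (X t))
    (A : Set H) (n : ℕ) : MeasurableSet {ω | collectTime X A ω ≤ n} := by
  have h : {ω | collectTime X A ω ≤ n} =
      {ω | n ∈ appSet X A ω} ∪ {ω | appSet X A ω = ∅} := by
    ext ω; simp [collectTime_le_iff]
  rw [h]
  exact (measurableSet_mem_appSet X hX A n).union (measurableSet_appSet_empty X hX A)

lemma measurable_collectTime (X : ℕ → Ω → H) (hX : ∀ t, Measurable (X t))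
    (A : Set H) : Measurable (collectTime X A) := by
  apply measurable_to_countable'
  intro k
  match k with
  | 0 =>
    have h : collectTime X A ⁻¹' {0} = {ω | collectTime X A ω ≤ 0} := by
      ext ω; simp [Nat.le_zero]
    rw [h]; exact measurableSet_collectTime_le X hX A 0
  | (k+1) =>
    have h : collectTime X A ⁻¹' {k+1} =
        {ω | collectTime X A ω ≤ k+1} \ {ω | collectTime X A ω ≤ k} := by
      ext ω
      simp only [Set.mem_preimage, Set.mem_singleton_iff, Set.mem_diff, Set.mem_setOf_eq]
      omega
    rw [h]
    exact (measurableSet_collectTime_le X hX A (k+1)).diff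
      (measurableSet_collectTime_le X hX A k)

end Meas

section AllIn

variable {Ω H : Type*}

/-- The event that all draws up to time `n` land in `S`. -/
def allIn [Fintype H] (X : ℕ → Ω → H) (S : Finset H) (n : ℕ) : Set Ω :=
  ⋂ s ∈ Finset.Icc 1 n, X s ⁻¹' (S : Set H)

variable [Fintype H]

lemma mem_allIn_iff {X : ℕ → Ω → H} {S : Finset H} {n : ℕ} {ω : Ω} :
    ω ∈ allIn X S n ↔ ∀ s, 1 ≤ s → s ≤ n → X s ω ∈ S := by
  simp [allIn, Finset.mem_Icc, and_imp]

lemma allIn_inter [DecidableEq H] {X : ℕ → Ω → H} {S T : Finset H} {n : ℕ} :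
    allIn X S n ∩ allIn X T n = allIn X (S ∩ T) n := by
  ext ω
  simp only [Set.mem_inter_iff, mem_allIn_iff, Finset.mem_inter]
  constructor
  · rintro ⟨h1, h2⟩ s hs1 hs2
    exact ⟨h1 s hs1 hs2, h2 s hs1 hs2⟩
  · intro h
    exact ⟨fun s hs1 hs2 => (h s hs1 hs2).1, fun s hs1 hs2 => (h s hs1 hs2).2⟩

lemma measurableSet_allIn [MeasurableSpace Ω] [MeasurableSpace H]
    [MeasurableSingletonClass H] {X : ℕ → Ω → H} (hX : ∀ t, Measurable (X t))
    (S : Finset H) (n : ℕ) : MeasurableSet (allIn X S n) :=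
  MeasurableSet.biInter (Set.to_countable _) fun s _ => hX s S.measurableSet

lemma notMem_appSet_singleton_eq {X : ℕ → Ω → H} [DecidableEq H] {c : H} {n : ℕ} :
    {ω | n ∉ appSet X {c} ω} = allIn X (Finset.univ \ {c}) n := by
  ext ω
  simp only [Set.mem_setOf_eq, mem_appSet_singleton_iff, mem_allIn_iff, Finset.mem_sdiff,
    Finset.mem_univ, Finset.mem_singleton, true_and]
  push_neg
  constructor
  · intro h s hs1 hs2
    exact h s hs1 hs2
  · intro h s hs1 hs2
    exact h s hs1 hs2

end AllIn

section Prob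

variable {Ω : Type*} [MeasurableSpace Ω] {μ : Measure Ω} [IsProbabilityMeasure μ]

lemma geo_sum {N k : ℕ} (hk0 : k ≠ 0) (hkN : k ≤ N) :
    ∑' n : ℕ, (((N - k : ℕ) : ℝ≥0∞) / N) ^ n = (N : ℝ≥0∞) / k := by
  have hN0 : (N : ℝ≥0∞) ≠ 0 := Nat.cast_ne_zero.2 (by omega)
  have hNtop : (N : ℝ≥0∞) ≠ ⊤ := ENNReal.natCast_ne_top N
  rw [ENNReal.tsum_geometric]
  have h1 : (1 : ℝ≥0∞) - ((N - k : ℕ) : ℝ≥0∞) / N = (k : ℝ≥0∞) / N := by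
    apply ENNReal.sub_eq_of_eq_add ((ENNReal.div_lt_top (ENNReal.natCast_ne_top _) hN0).ne)
    rw [ENNReal.div_add_div_same]
    have h2 : ((k : ℝ≥0∞) + ((N - k : ℕ) : ℝ≥0∞)) = (N : ℝ≥0∞) := by
      rw [← Nat.cast_add]
      congr 1
      omega
    rw [h2, ENNReal.div_self hN0 hNtop]
  rw [h1, ENNReal.inv_div (Or.inl hNtop) (Or.inl hN0)]

lemma IE3 {A B C : Set Ω} (hB : MeasurableSet B) (hC : MeasurableSet C) :
    μ (A ∪ B ∪ C) + (μ (A ∩ B) + μ (A ∩ C) + μ (B ∩ C)) =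
      (μ A + μ B + μ C) + μ (A ∩ B ∩ C) := by
  have m1 : μ (A ∪ B) + μ (A ∩ B) = μ A + μ B := measure_union_add_inter A hB
  have m2 : μ (A ∪ B ∪ C) + μ ((A ∪ B) ∩ C) = μ (A ∪ B) + μ C :=
    measure_union_add_inter _ hC
  have hset : (A ∪ B) ∩ C = (A ∩ C) ∪ (B ∩ C) := Set.union_inter_distrib_right A B C
  have hset2 : (A ∩ C) ∩ (B ∩ C) = A ∩ B ∩ C := by ext x; simp; tauto
  have m3 : μ ((A ∩ C) ∪ (B ∩ C)) + μ (A ∩ B ∩ C) = μ (A ∩ C) + μ (B ∩ C) := by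
    rw [← hset2]; exact measure_union_add_inter _ (hB.inter hC)
  calc μ (A ∪ B ∪ C) + (μ (A ∩ B) + μ (A ∩ C) + μ (B ∩ C))
      = μ (A ∩ B) + (μ (A ∪ B ∪ C) + (μ ((A ∩ C) ∪ (B ∩ C)) + μ (A ∩ B ∩ C))) := by
        rw [m3]; ring
    _ = μ (A ∩ B) + ((μ (A ∪ B ∪ C) + μ ((A ∪ B) ∩ C)) + μ (A ∩ B ∩ C)) := by
        rw [hset]; ring
    _ = (μ (A ∪ B) + μ (A ∩ B)) + μ C + μ (A ∩ B ∩ C) := by rw [m2]; ring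
    _ = (μ A + μ B + μ C) + μ (A ∩ B ∩ C) := by rw [m1]

lemma tail_eq_of_null {s t u : Set Ω} (hst : s ⊆ t) (htu : t \ s ⊆ u) (hu : μ u = 0) :
    μ s = μ t := by
  refine le_antisymm (measure_mono hst) ?_
  calc μ t ≤ μ (t ∩ s) + μ (t \ s) := measure_le_inter_add_diff μ t s
    _ ≤ μ s + 0 := add_le_add (measure_mono Set.inter_subset_right)
        ((measure_mono htu).trans hu.le)
    _ = μ s := add_zero _

variable {H : Type*} [Fintype H] [MeasurableSpace H] [MeasurableSingletonClass H]
  {N : ℕ} {X : ℕ → Ω → H}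

lemma meas_all_mem (hX : ∀ t, Measurable (X t))
    (hindep : iIndepFun X μ)
    (hunif : ∀ t, ∀ c : H, μ {ω | X t ω = c} = (N : ENNReal)⁻¹)
    (S : Finset H) (n : ℕ) :
    μ (allIn X S n) = ((S.card : ℝ≥0∞) / N) ^ n := by
  have h1 : ∀ s : ℕ, μ (X s ⁻¹' (S : Set H)) = (S.card : ℝ≥0∞) / N := by
    intro s
    have he : X s ⁻¹' (S : Set H) = ⋃ a ∈ S, X s ⁻¹' ({a} : Set H) := by
      ext ω; simp
    rw [he, measure_biUnion_finset ?_ (fun a _ => hX s (measurableSet_singleton a))]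
    · have h2 : ∀ a ∈ S, μ (X s ⁻¹' ({a} : Set H)) = (N : ℝ≥0∞)⁻¹ :=
        fun a _ => hunif s a
      rw [Finset.sum_congr rfl h2, Finset.sum_const, nsmul_eq_mul, div_eq_mul_inv]
    · intro a _ b _ hab
      exact Set.disjoint_left.2 fun ω h1' h2' => hab (by
        simp only [Set.mem_preimage, Set.mem_singleton_iff] at h1' h2'
        rw [← h1', ← h2'])
  rw [allIn, hindep.measure_inter_preimage_eq_mul (Finset.Icc 1 n)
    (sets := fun _ => (S : Set H)) (fun i _ => S.measurableSet)]
  rw [Finset.prod_congr rfl (fun s _ => h1 s), Finset.prod_const, Nat.card_Icc]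
  norm_num

/-- Almost surely, any given element eventually appears. -/
lemma appSet_singleton_empty_null [DecidableEq H] (hN : 1 ≤ N)
    (hcard : Fintype.card H = N) (hX : ∀ t, Measurable (X t))
    (hindep : iIndepFun X μ)
    (hunif : ∀ t, ∀ c : H, μ {ω | X t ω = c} = (N : ENNReal)⁻¹)
    (a : H) : μ {ω | appSet X {a} ω = ∅} = 0 := by
  have hsub : ∀ n : ℕ, {ω | appSet X {a} ω = ∅} ⊆ allIn X (Finset.univ \ {a}) n := by
    intro n ω hω
    rw [Set.mem_setOf_eq] at hω
    rw [mem_allIn_iff]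
    intro s hs1 hs2
    simp only [Finset.mem_sdiff, Finset.mem_univ, Finset.mem_singleton, true_and]
    intro hXa
    have : s ∈ appSet X {a} ω := mem_appSet_singleton_iff.2 ⟨s, hs1, le_refl s, hXa⟩
    rw [hω] at this
    exact this
  have hcard' : (Finset.univ \ ({a} : Finset H)).card = N - 1 := by
    rw [Finset.card_sdiff_of_subset (Finset.subset_univ _), Finset.card_univ, hcard,
      Finset.card_singleton]
  have hle : ∀ n : ℕ, μ {ω | appSet X {a} ω = ∅} ≤ (((N - 1 : ℕ) : ℝ≥0∞) / N) ^ n := by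
    intro n
    calc μ {ω | appSet X {a} ω = ∅} ≤ μ (allIn X (Finset.univ \ {a}) n) :=
          measure_mono (hsub n)
      _ = (((N - 1 : ℕ) : ℝ≥0∞) / N) ^ n := by
          rw [meas_all_mem hX hindep hunif, hcard']
  have hlt : ((N - 1 : ℕ) : ℝ≥0∞) / N < 1 := by
    rw [ENNReal.div_lt_iff (Or.inl (Nat.cast_ne_zero.2 (by omega)))
      (Or.inl (ENNReal.natCast_ne_top N)), one_mul]
    exact_mod_cast Nat.sub_lt (by omega) one_pos
  have htend := ENNReal.tendsto_pow_atTop_nhds_zero_of_lt_one hlt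
  have hle0 : μ {ω | appSet X {a} ω = ∅} ≤ 0 :=
    le_of_tendsto_of_tendsto' tendsto_const_nhds htend hle
  exact le_antisymm hle0 zero_le

end Prob

end TimeShareAux
open TimeShareAux in
/-- Time-sharing delay: with probability `α` (flag `B = true`, independent of the draws)
decode by the first-to-complete rule at time `min(τ_c, σ_{a₁,a₂,a₃})`, and otherwise
decode by the complement-only rule at time `τ_c`.  The average delay is
`E[D] = (1−α)·N + α·(3/4)·N = (1−α/4)·N`. -/
theorem time_sharing_delay
    {Ω : Type*} [MeasurableSpace Ω] (μ : Measure Ω) [IsProbabilityMeasure μ]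
    {H : Type*} [Fintype H] [MeasurableSpace H] [MeasurableSingletonClass H]
    (N : ℕ) (hN : 4 ≤ N) (hcard : Fintype.card H = N)
    (X : ℕ → Ω → H) (hmeas : ∀ t, Measurable (X t))
    (hindep : iIndepFun X μ)
    (hunif : ∀ t, ∀ c : H, μ {ω | X t ω = c} = (N : ENNReal)⁻¹)
    (c a₁ a₂ a₃ : H)
    (h₁₂ : a₁ ≠ a₂) (h₁₃ : a₁ ≠ a₃) (h₂₃ : a₂ ≠ a₃)
    (hc₁ : c ≠ a₁) (hc₂ : c ≠ a₂) (hc₃ : c ≠ a₃)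
    (α : ℝ) (hα0 : 0 ≤ α) (hα1 : α ≤ 1)
    (B : Ω → Bool) (hBmeas : Measurable B)
    (hBdist : μ {ω | B ω = true} = ENNReal.ofReal α)
    (hBindep : IndepFun B (fun ω => fun t => X t ω) μ)
    (D : Ω → ℕ)
    (hD : ∀ ω, D ω = if B ω then min (hitTime X c ω) (collectTime X {a₁, a₂, a₃} ω)
      else hitTime X c ω) :
    ∫ ω, (D ω : ℝ) ∂μ = (1 - α) * N + α * ((3 / 4) * N) ∧
      (1 - α) * (N : ℝ) + α * ((3 / 4) * N) = (1 - α / 4) * N := by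
  classical
  refine ⟨?_, by ring⟩
  -- null sets
  have hnull : ∀ a : H, μ {ω | appSet X {a} ω = ∅} = 0 := fun a =>
    appSet_singleton_empty_null (by omega) hcard hmeas hindep hunif a
  have hnullA : μ {ω | appSet X ({a₁, a₂, a₃} : Set H) ω = ∅} = 0 :=
    measure_mono_null (appSet_triple_empty_subset X a₁ a₂ a₃)
      (measure_union_null (measure_union_null (hnull a₁) (hnull a₂)) (hnull a₃))
  -- cardinalities
  have hcard1 : (Finset.univ \ ({c} : Finset H)).card = N - 1 := by
    rw [Finset.card_sdiff_of_subset (Finset.subset_univ _), Finset.card_univ, hcard,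
      Finset.card_singleton]
  have hpair : ∀ (a : H), c ≠ a → (Finset.univ \ ({c, a} : Finset H)).card = N - 2 := by
    intro a hca
    rw [Finset.card_sdiff_of_subset (Finset.subset_univ _), Finset.card_univ, hcard]
    rw [Finset.card_insert_of_notMem (by simp [hca]), Finset.card_singleton]
  have htrip : ∀ (a b : H), c ≠ a → c ≠ b → a ≠ b →
      (Finset.univ \ ({c, a, b} : Finset H)).card = N - 3 := by
    intro a b hca hcb hab
    rw [Finset.card_sdiff_of_subset (Finset.subset_univ _), Finset.card_univ, hcard]
    rw [Finset.card_insert_of_notMem (by simp [hca, hcb]),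
      Finset.card_insert_of_notMem (by simp [hab]), Finset.card_singleton]
  have hquad : (Finset.univ \ ({c, a₁, a₂, a₃} : Finset H)).card = N - 4 := by
    rw [Finset.card_sdiff_of_subset (Finset.subset_univ _), Finset.card_univ, hcard]
    rw [Finset.card_insert_of_notMem (by simp [hc₁, hc₂, hc₃]),
      Finset.card_insert_of_notMem (by simp [h₁₂, h₁₃]),
      Finset.card_insert_of_notMem (by simp [h₂₃]), Finset.card_singleton]
  -- tail probability of τ
  have htau : ∀ n : ℕ, μ {ω | n < collectTime X {c} ω} = (((N - 1 : ℕ) : ℝ≥0∞) / N) ^ n := by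
    intro n
    have h1 : μ {ω | n < collectTime X {c} ω} = μ {ω | n ∉ appSet X {c} ω} := by
      refine tail_eq_of_null ?_ ?_ (hnull c)
      · intro ω hω
        exact (lt_collectTime_iff.1 hω).1
      · rintro ω ⟨hω1, hω2⟩
        simp only [Set.mem_setOf_eq] at hω1 hω2 ⊢
        by_contra hne
        exact hω2 (lt_collectTime_iff.2 ⟨hω1, Set.nonempty_iff_ne_empty.2 hne⟩)
    rw [h1, notMem_appSet_singleton_eq, meas_all_mem hmeas hindep hunif, hcard1]
  -- tail identity for min
  have hmin : ∀ n : ℕ,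
      μ {ω | n < min (collectTime X {c} ω) (collectTime X {a₁, a₂, a₃} ω)}
        + 3 * (((N - 3 : ℕ) : ℝ≥0∞) / N) ^ n
      = 3 * (((N - 2 : ℕ) : ℝ≥0∞) / N) ^ n + (((N - 4 : ℕ) : ℝ≥0∞) / N) ^ n := by
    intro n
    set A1 : Set Ω := allIn X (Finset.univ \ {c, a₁}) n with hA1
    set A2 : Set Ω := allIn X (Finset.univ \ {c, a₂}) n with hA2
    set A3 : Set Ω := allIn X (Finset.univ \ {c, a₃}) n with hA3
    have hTT : ∀ T T' : Finset H,
        (Finset.univ \ T) ∩ (Finset.univ \ T') = Finset.univ \ (T ∪ T') := by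
      intro T T'
      ext x
      simp only [Finset.mem_inter, Finset.mem_sdiff, Finset.mem_univ, Finset.mem_union,
        true_and, not_or]
    have hnotmem : ∀ (a : H) (ω : Ω),
        n ∉ appSet X {a} ω ↔ ω ∈ allIn X (Finset.univ \ ({a} : Finset H)) n := by
      intro a ω
      have := Set.ext_iff.1 (notMem_appSet_singleton_eq (X := X) (c := a) (n := n)) ω
      simpa using this
    have hstep : μ {ω | n < min (collectTime X {c} ω) (collectTime X {a₁, a₂, a₃} ω)}
        = μ (A1 ∪ A2 ∪ A3) := by
      have ht : (A1 ∪ A2 ∪ A3)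
          = {ω | n ∉ appSet X {c} ω ∧ n ∉ appSet X ({a₁, a₂, a₃} : Set H) ω} := by
        ext ω
        have e1 : ∀ a : H, (ω ∈ allIn X (Finset.univ \ ({c, a} : Finset H)) n) ↔
            (n ∉ appSet X {c} ω ∧ n ∉ appSet X {a} ω) := by
          intro a
          rw [hnotmem c ω, hnotmem a ω]
          have hu : ({c} ∪ {a} : Finset H) = {c, a} := by
            ext x
            simp only [Finset.mem_union, Finset.mem_insert, Finset.mem_singleton]
          have : allIn X (Finset.univ \ ({c} : Finset H)) n ∩
              allIn X (Finset.univ \ ({a} : Finset H)) n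
              = allIn X (Finset.univ \ ({c, a} : Finset H)) n := by
            rw [allIn_inter, hTT, hu]
          rw [← this]
          rfl
        simp only [Set.mem_union, hA1, hA2, hA3, e1, Set.mem_setOf_eq,
          mem_appSet_triple_iff]
        tauto
      rw [ht]
      refine tail_eq_of_null ?_ (u := {ω | appSet X ({c} : Set H) ω = ∅}
        ∪ {ω | appSet X ({a₁, a₂, a₃} : Set H) ω = ∅}) ?_
        (measure_union_null (hnull c) hnullA)
      · intro ω hω
        simp only [Set.mem_setOf_eq, lt_min_iff] at hω
        exact ⟨(lt_collectTime_iff.1 hω.1).1, (lt_collectTime_iff.1 hω.2).1⟩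
      · rintro ω ⟨⟨hω1, hω2⟩, hω3⟩
        simp only [Set.mem_setOf_eq, lt_min_iff, not_and_or] at hω3
        simp only [Set.mem_union, Set.mem_setOf_eq]
        rcases hω3 with h | h
        · left
          by_contra hne
          exact h (lt_collectTime_iff.2 ⟨hω1, Set.nonempty_iff_ne_empty.2 hne⟩)
        · right
          by_contra hne
          exact h (lt_collectTime_iff.2 ⟨hω2, Set.nonempty_iff_ne_empty.2 hne⟩)
    have hMA1 : MeasurableSet A1 := measurableSet_allIn hmeas _ n
    have hMA2 : MeasurableSet A2 := measurableSet_allIn hmeas _ n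
    have hMA3 : MeasurableSet A3 := measurableSet_allIn hmeas _ n
    have hIE := IE3 (μ := μ) (A := A1) hMA2 hMA3
    -- values of the simple events
    have hval : ∀ T : Finset H, μ (allIn X (Finset.univ \ T) n)
        = ((((Finset.univ \ T : Finset H)).card : ℝ≥0∞) / N) ^ n :=
      fun T => meas_all_mem hmeas hindep hunif _ n
    have hinter : ∀ T T' : Finset H, allIn X (Finset.univ \ T) n ∩ allIn X (Finset.univ \ T') n
        = allIn X (Finset.univ \ (T ∪ T')) n := by
      intro T T'
      rw [allIn_inter, hTT]
    have h12 : A1 ∩ A2 = allIn X (Finset.univ \ ({c, a₁, a₂} : Finset H)) n := by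
      rw [hA1, hA2, hinter]
      have hu : (({c, a₁} : Finset H) ∪ {c, a₂}) = ({c, a₁, a₂} : Finset H) := by
        ext x
        simp only [Finset.mem_union, Finset.mem_insert, Finset.mem_singleton]
        tauto
      rw [hu]
    have h13 : A1 ∩ A3 = allIn X (Finset.univ \ ({c, a₁, a₃} : Finset H)) n := by
      rw [hA1, hA3, hinter]
      have hu : (({c, a₁} : Finset H) ∪ {c, a₃}) = ({c, a₁, a₃} : Finset H) := by
        ext x
        simp only [Finset.mem_union, Finset.mem_insert, Finset.mem_singleton]
        tauto
      rw [hu]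
    have h23 : A2 ∩ A3 = allIn X (Finset.univ \ ({c, a₂, a₃} : Finset H)) n := by
      rw [hA2, hA3, hinter]
      have hu : (({c, a₂} : Finset H) ∪ {c, a₃}) = ({c, a₂, a₃} : Finset H) := by
        ext x
        simp only [Finset.mem_union, Finset.mem_insert, Finset.mem_singleton]
        tauto
      rw [hu]
    have h123 : A1 ∩ A2 ∩ A3 = allIn X (Finset.univ \ ({c, a₁, a₂, a₃} : Finset H)) n := by
      rw [hA1, hA2, hinter, hA3, hinter]
      have hu : ((({c, a₁} : Finset H) ∪ {c, a₂}) ∪ {c, a₃}) = ({c, a₁, a₂, a₃} : Finset H) := by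
        ext x
        simp only [Finset.mem_union, Finset.mem_insert, Finset.mem_singleton]
        tauto
      rw [hu]
    rw [h123, h12, h13, h23, hval, hval, hval, hval] at hIE
    rw [hval, hval, hval] at hIE
    rw [htrip a₁ a₂ hc₁ hc₂ h₁₂, htrip a₁ a₃ hc₁ hc₃ h₁₃, htrip a₂ a₃ hc₂ hc₃ h₂₃,
      hquad, hpair a₁ hc₁, hpair a₂ hc₂, hpair a₃ hc₃] at hIE
    rw [hstep]
    calc μ (A1 ∪ A2 ∪ A3) + 3 * (((N - 3 : ℕ) : ℝ≥0∞) / N) ^ n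
        = μ (A1 ∪ A2 ∪ A3) + ((((N - 3 : ℕ) : ℝ≥0∞) / N) ^ n
            + (((N - 3 : ℕ) : ℝ≥0∞) / N) ^ n + (((N - 3 : ℕ) : ℝ≥0∞) / N) ^ n) := by
          ring
      _ = (((N - 2 : ℕ) : ℝ≥0∞) / N) ^ n + (((N - 2 : ℕ) : ℝ≥0∞) / N) ^ n
            + (((N - 2 : ℕ) : ℝ≥0∞) / N) ^ n + (((N - 4 : ℕ) : ℝ≥0∞) / N) ^ n := hIE
      _ = 3 * (((N - 2 : ℕ) : ℝ≥0∞) / N) ^ n + (((N - 4 : ℕ) : ℝ≥0∞) / N) ^ n := by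
          ring
  -- measurability
  have hmeasτ : Measurable (collectTime X ({c} : Set H)) := measurable_collectTime X hmeas _
  have hmeasσ : Measurable (collectTime X ({a₁, a₂, a₃} : Set H)) :=
    measurable_collectTime X hmeas _
  have hDmeas : Measurable D := by
    have hDeq : D = fun ω => if B ω then min (hitTime X c ω) (collectTime X {a₁, a₂, a₃} ω)
        else hitTime X c ω := funext hD
    rw [hDeq]
    exact Measurable.ite (hBmeas (measurableSet_singleton true)) (hmeasτ.min hmeasσ) hmeasτ
  -- the Bernoulli flag
  have hBset : MeasurableSet {ω | B ω = true} := hBmeas (measurableSet_singleton true)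
  have hBfalse : μ {ω | B ω = false} = 1 - ENNReal.ofReal α := by
    have hcompl : {ω | B ω = false} = {ω | B ω = true}ᶜ := by
      ext ω; simp
    rw [hcompl, measure_compl hBset (measure_ne_top μ _), measure_univ, hBdist]
  -- splitting the tail of D using independence
  have hcoordmeas : ∀ t : ℕ, Measurable (fun y : ℕ → H => y t) := fun t => measurable_pi_apply t
  have hsplit : ∀ n : ℕ, μ {ω | n < D ω} =
      ENNReal.ofReal α *
        μ {ω | n < min (collectTime X {c} ω) (collectTime X {a₁, a₂, a₃} ω)}
      + (1 - ENNReal.ofReal α) * μ {ω | n < collectTime X {c} ω} := by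
    intro n
    have hunion : {ω | n < D ω} =
        ({ω | B ω = true} ∩
          {ω | n < min (collectTime X {c} ω) (collectTime X {a₁, a₂, a₃} ω)})
        ∪ ({ω | B ω = false} ∩ {ω | n < collectTime X {c} ω}) := by
      ext ω
      cases hb : B ω <;> simp [Set.mem_setOf_eq, hD ω, hb, hitTime]
    have hdisj : Disjoint
        ({ω | B ω = true} ∩
          {ω | n < min (collectTime X {c} ω) (collectTime X {a₁, a₂, a₃} ω)})
        ({ω | B ω = false} ∩ {ω | n < collectTime X {c} ω}) := by
      refine Set.disjoint_left.2 ?_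
      rintro ω ⟨h1, -⟩ ⟨h2, -⟩
      simp only [Set.mem_setOf_eq] at h1 h2
      rw [h1] at h2
      simp at h2
    have hm2 : MeasurableSet ({ω | B ω = false} ∩ {ω | n < collectTime X {c} ω}) :=
      (hBmeas (measurableSet_singleton false)).inter (hmeasτ measurableSet_Ioi)
    rw [hunion, measure_union hdisj hm2]
    have e1 : μ ({ω | B ω = true} ∩
        {ω | n < min (collectTime X {c} ω) (collectTime X {a₁, a₂, a₃} ω)})
        = μ {ω | B ω = true} *
          μ {ω | n < min (collectTime X {c} ω) (collectTime X {a₁, a₂, a₃} ω)} := by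
      have hW : MeasurableSet {y : ℕ → H | n <
          min (collectTime (fun t (y : ℕ → H) => y t) ({c} : Set H) y)
            (collectTime (fun t (y : ℕ → H) => y t) ({a₁, a₂, a₃} : Set H) y)} :=
        ((measurable_collectTime (fun t (y : ℕ → H) => y t) hcoordmeas {c}).min
          (measurable_collectTime (fun t (y : ℕ → H) => y t) hcoordmeas {a₁, a₂, a₃}))
          measurableSet_Ioi
      exact hBindep.measure_inter_preimage_eq_mul _ _ (measurableSet_singleton true) hW
    have e2 : μ ({ω | B ω = false} ∩ {ω | n < collectTime X {c} ω})
        = μ {ω | B ω = false} * μ {ω | n < collectTime X {c} ω} := by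
      have hW : MeasurableSet {y : ℕ → H | n <
          collectTime (fun t (y : ℕ → H) => y t) ({c} : Set H) y} :=
        (measurable_collectTime (fun t (y : ℕ → H) => y t) hcoordmeas {c}) measurableSet_Ioi
      exact hBindep.measure_inter_preimage_eq_mul _ _ (measurableSet_singleton false) hW
    rw [e1, e2, hBdist, hBfalse]
  -- the expectation as sum of tails
  have hDset : ∀ n : ℕ, MeasurableSet {ω | n < D ω} := fun n => hDmeas measurableSet_Ioi
  have hlint : ∫⁻ ω, (D ω : ℝ≥0∞) ∂μ = ∑' n : ℕ, μ {ω | n < D ω} := by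
    have hpt : ∀ ω, (D ω : ℝ≥0∞)
        = ∑' n : ℕ, Set.indicator {ω' | n < D ω'} (fun _ => (1 : ℝ≥0∞)) ω := by
      intro ω
      have h1 : ∑' n : ℕ, Set.indicator {ω' | n < D ω'} (fun _ => (1 : ℝ≥0∞)) ω
          = ∑ n ∈ Finset.range (D ω),
            Set.indicator {ω' | n < D ω'} (fun _ => (1 : ℝ≥0∞)) ω :=
        tsum_eq_sum (fun n hn =>
          Set.indicator_of_notMem (s := {ω' | n < D ω'}) (a := ω)
            (fun (h : n < D ω) => hn (Finset.mem_range.2 h)) _)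
      rw [h1, Finset.sum_congr rfl
        (fun n hn => Set.indicator_of_mem (s := {ω' | n < D ω'}) (a := ω)
          (Finset.mem_range.1 hn : n < D ω) _),
        Finset.sum_const, Finset.card_range, nsmul_eq_mul, mul_one]
    calc ∫⁻ ω, (D ω : ℝ≥0∞) ∂μ
        = ∫⁻ ω, ∑' n : ℕ, Set.indicator {ω' | n < D ω'} (fun _ => (1 : ℝ≥0∞)) ω ∂μ :=
          lintegral_congr hpt
      _ = ∑' n : ℕ, ∫⁻ ω, Set.indicator {ω' | n < D ω'} (fun _ => (1 : ℝ≥0∞)) ω ∂μ :=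
          lintegral_tsum (fun n => (measurable_const.indicator (hDset n)).aemeasurable)
      _ = ∑' n : ℕ, μ {ω | n < D ω} := by
          exact tsum_congr fun n => lintegral_indicator_one (hDset n)
  -- finiteness helpers
  have hNfin : (N : ℝ≥0∞) ≠ ⊤ := ENNReal.natCast_ne_top N
  have hdiv2 : (N : ℝ≥0∞) / 2 ≠ ⊤ := (ENNReal.div_lt_top hNfin (by norm_num)).ne
  have hdiv3 : (N : ℝ≥0∞) / 3 ≠ ⊤ := (ENNReal.div_lt_top hNfin (by norm_num)).ne
  have hdiv4 : (N : ℝ≥0∞) / 4 ≠ ⊤ := (ENNReal.div_lt_top hNfin (by norm_num)).ne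
  have h3Nfin : (3 : ℝ≥0∞) * N ≠ ⊤ := ENNReal.mul_ne_top (by norm_num) hNfin
  have h3N4 : (3 : ℝ≥0∞) * N / 4 ≠ ⊤ := (ENNReal.div_lt_top h3Nfin (by norm_num)).ne
  have h3d3 : (3 : ℝ≥0∞) * ((N : ℝ≥0∞) / 3) ≠ ⊤ := ENNReal.mul_ne_top (by norm_num) hdiv3
  -- the expected waiting time of the first-to-complete rule
  have hT3 : (∑' n : ℕ,
      μ {ω | n < min (collectTime X {c} ω) (collectTime X {a₁, a₂, a₃} ω)})
      = 3 * (N : ℝ≥0∞) / 4 := by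
    have h1 := tsum_congr (L := SummationFilter.unconditional ℕ) hmin
    rw [ENNReal.tsum_add, ENNReal.tsum_add, ENNReal.tsum_mul_left, ENNReal.tsum_mul_left,
      geo_sum (by norm_num) (by omega), geo_sum (by norm_num) (by omega),
      geo_sum (by norm_num) (by omega)] at h1
    simp only [Nat.cast_ofNat] at h1
    have harith : (3 : ℝ≥0∞) * ((N : ℝ≥0∞) / 2) + (N : ℝ≥0∞) / 4
        = 3 * (N : ℝ≥0∞) / 4 + 3 * ((N : ℝ≥0∞) / 3) := by
      refine (ENNReal.toReal_eq_toReal_iff'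
        (ENNReal.add_ne_top.2 ⟨ENNReal.mul_ne_top (by norm_num) hdiv2, hdiv4⟩)
        (ENNReal.add_ne_top.2 ⟨h3N4, h3d3⟩)).1 ?_
      rw [ENNReal.toReal_add (ENNReal.mul_ne_top (by norm_num) hdiv2) hdiv4,
        ENNReal.toReal_add h3N4 h3d3]
      simp only [ENNReal.toReal_div, ENNReal.toReal_mul, ENNReal.toReal_ofNat,
        ENNReal.toReal_natCast]
      ring
    rw [harith] at h1
    exact (ENNReal.add_left_inj h3d3).1 h1
  -- the expected waiting time of the complement-only rule
  have hT1 : (∑' n : ℕ, μ {ω | n < collectTime X {c} ω}) = (N : ℝ≥0∞) := by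
    rw [tsum_congr htau, geo_sum (by norm_num) (by omega), Nat.cast_one, div_one]
  -- total value of the lintegral
  have hLval : ∫⁻ ω, (D ω : ℝ≥0∞) ∂μ
      = ENNReal.ofReal α * (3 * (N : ℝ≥0∞) / 4) + (1 - ENNReal.ofReal α) * N := by
    rw [hlint, tsum_congr hsplit, ENNReal.tsum_add, ENNReal.tsum_mul_left,
      ENNReal.tsum_mul_left, hT3, hT1]
  -- convert to the Bochner integral
  have hint : ∫ ω, (D ω : ℝ) ∂μ = (∫⁻ ω, (D ω : ℝ≥0∞) ∂μ).toReal := by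
    rw [integral_eq_lintegral_of_nonneg_ae
      (Filter.Eventually.of_forall (fun ω => Nat.cast_nonneg _))
      ((measurable_from_top.comp hDmeas).aestronglyMeasurable)]
    congr 1
    exact lintegral_congr fun ω => ENNReal.ofReal_natCast (D ω)
  rw [hint, hLval]
  have hαle : ENNReal.ofReal α ≤ 1 := ENNReal.ofReal_le_one.2 hα1
  rw [ENNReal.toReal_add
    (ENNReal.mul_ne_top ENNReal.ofReal_ne_top h3N4)
    (ENNReal.mul_ne_top (by
      exact (tsub_le_self.trans_lt (by norm_num : (1:ℝ≥0∞) < ⊤)).ne) hNfin),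
    ENNReal.toReal_mul, ENNReal.toReal_mul, ENNReal.toReal_ofReal hα0,
    ENNReal.toReal_div, ENNReal.toReal_mul,
    ENNReal.toReal_sub_of_le hαle ENNReal.one_ne_top,
    ENNReal.toReal_ofReal hα0]
  simp only [ENNReal.toReal_ofNat, ENNReal.toReal_natCast, ENNReal.toReal_one]
  ring
end

section
/- Let H be a finite set with |H| = N ≥ 1, let (X_t)_{t≥1} be i.i.d. random variables each uniformly distributed on H, and let A₁, …, A_r ⊆ H be pairwise disjoint nonempty subsets with |A_i| = a_i. Let T = min_{1≤i≤r} σ_{A_i} be the first time at which some A_i has been completely collected. Then E[T] = N · ∫₀¹ (1/(1−u)) · ∏_{i=1}^{r} (1 − u^{a_i}) du. (With a_i = m_i − 1, this is the average delay d^I of first-to-complete alignment among disjoint alignment sets of sizes I = (m₁, …, m_r), where the initial channel matrix has already occurred.) -/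
open MeasureTheory ProbabilityTheory
open scoped ENNReal NNReal

section Aux

private lemma alg_expand {H : Type*} [DecidableEq H] {R : Type*} [CommRing R]
    {r : ℕ} (A : Fin r → Finset H) (Y : H → R) :
    ∏ i, (1 - ∏ a ∈ A i, (1 - Y a)) =
      ∑ γ ∈ Fintype.piFinset (fun i => (A i).powerset.erase ∅),
        (∏ i, (-1 : R) ^ ((γ i).card + 1)) * ∏ i, ∏ a ∈ γ i, Y a := by
  have h1 : ∀ i : Fin r, (1 - ∏ a ∈ A i, (1 - Y a)) =
      ∑ C ∈ (A i).powerset.erase ∅, (-1 : R) ^ (C.card + 1) * ∏ a ∈ C, Y a := by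
    intro i
    have hexp : ∏ a ∈ A i, (1 - Y a)
        = ∑ C ∈ (A i).powerset, (-1 : R) ^ C.card * ∏ a ∈ C, Y a := by
      have h := Finset.prod_add (fun a => -Y a) (fun _ => (1 : R)) (A i)
      simp only [Finset.prod_const_one, mul_one] at h
      calc ∏ a ∈ A i, (1 - Y a) = ∏ a ∈ A i, (-Y a + 1) := by
            refine Finset.prod_congr rfl fun a _ => by ring
        _ = ∑ C ∈ (A i).powerset, ∏ a ∈ C, -Y a := h
        _ = ∑ C ∈ (A i).powerset, (-1 : R) ^ C.card * ∏ a ∈ C, Y a := by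
            refine Finset.sum_congr rfl fun C _ => ?_
            calc ∏ a ∈ C, -Y a = ∏ a ∈ C, ((-1 : R) * Y a) := by
                  exact Finset.prod_congr rfl fun a _ => by ring
              _ = (-1 : R) ^ C.card * ∏ a ∈ C, Y a := by
                  rw [Finset.prod_mul_distrib, Finset.prod_const]
    have hsplit := Finset.sum_erase_add (A i).powerset
      (fun C => (-1 : R) ^ C.card * ∏ a ∈ C, Y a) (Finset.empty_mem_powerset (A i))
    rw [hexp, ← hsplit]
    simp only [Finset.card_empty, pow_zero, one_mul, Finset.prod_empty]
    rw [show (1 : R) - (∑ x ∈ (A i).powerset.erase ∅, (-1:R) ^ x.card * ∏ a ∈ x, Y a + 1)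
        = ∑ x ∈ (A i).powerset.erase ∅, -((-1:R) ^ x.card * ∏ a ∈ x, Y a) from by
          rw [Finset.sum_neg_distrib]; ring]
    exact Finset.sum_congr rfl fun C _ => by rw [pow_succ]; ring
  calc ∏ i, (1 - ∏ a ∈ A i, (1 - Y a))
      = ∏ i, ∑ C ∈ (A i).powerset.erase ∅, (-1 : R) ^ (C.card + 1) * ∏ a ∈ C, Y a := by
        exact Finset.prod_congr rfl fun i _ => h1 i
    _ = ∑ γ ∈ Fintype.piFinset (fun i => (A i).powerset.erase ∅),
          ∏ i, ((-1 : R) ^ ((γ i).card + 1) * ∏ a ∈ γ i, Y a) :=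
        Finset.prod_univ_sum _ _
    _ = _ := Finset.sum_congr rfl fun γ _ => Finset.prod_mul_distrib

variable {Ω : Type*} [MeasurableSpace Ω] {μ : Measure Ω} [IsProbabilityMeasure μ]
    {H : Type*} [Fintype H] [MeasurableSpace H] [MeasurableSingletonClass H]
    {N : ℕ} {X : ℕ → Ω → H}

private lemma meas_preimage_finset (hmeas : ∀ t, Measurable (X t))
    (hunif : ∀ t, ∀ c : H, μ {ω | X t ω = c} = (N : ENNReal)⁻¹)
    (s : ℕ) (C : Finset H) :
    μ (X s ⁻¹' ↑C) = (C.card : ℝ≥0∞) * (N : ℝ≥0∞)⁻¹ := by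
  classical
  have hrw : X s ⁻¹' ↑C = ⋃ c ∈ C, X s ⁻¹' {c} := by ext ω; simp
  rw [hrw, measure_biUnion_finset ?_ (fun c _ => hmeas s (measurableSet_singleton c))]
  · have h : ∀ c ∈ C, μ (X s ⁻¹' {c}) = (N : ℝ≥0∞)⁻¹ := by
      intro c _
      have : X s ⁻¹' {c} = {ω | X s ω = c} := by ext ω; simp
      rw [this, hunif]
    rw [Finset.sum_congr rfl h, Finset.sum_const, nsmul_eq_mul]
  · intro c _ d _ hcd
    refine Set.disjoint_left.mpr fun ω h1 h2 => hcd ?_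
    simp only [Set.mem_preimage, Set.mem_singleton_iff] at h1 h2
    rw [← h1, ← h2]

private lemma meas_unseen (hcard : Fintype.card H = N)
    (hmeas : ∀ t, Measurable (X t))
    (hindep : iIndepFun X μ)
    (hunif : ∀ t, ∀ c : H, μ {ω | X t ω = c} = (N : ENNReal)⁻¹)
    (B : Finset H) (t : ℕ) :
    μ (⋂ s ∈ Finset.Icc 1 t, X s ⁻¹' (↑B)ᶜ)
      = (((N - B.card : ℕ) : ℝ≥0∞) * (N : ℝ≥0∞)⁻¹) ^ t := by
  classical
  have hBmeas : MeasurableSet (↑B : Set H) := B.measurableSet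
  rw [hindep.meas_biInter (fun s _ => ⟨(↑B)ᶜ, hBmeas.compl, rfl⟩)]
  have h : ∀ s ∈ Finset.Icc 1 t,
      μ (X s ⁻¹' (↑B)ᶜ) = ((N - B.card : ℕ) : ℝ≥0∞) * (N : ℝ≥0∞)⁻¹ := by
    intro s _
    have h1 : (↑B : Set H)ᶜ = ↑(Bᶜ) := by simp
    rw [h1, meas_preimage_finset hmeas hunif s, Finset.card_compl, hcard]
  rw [Finset.prod_congr rfl h, Finset.prod_const, Nat.card_Icc]
  norm_num

private lemma meas_unseen_toReal (hcard : Fintype.card H = N)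
    (hmeas : ∀ t, Measurable (X t))
    (hindep : iIndepFun X μ)
    (hunif : ∀ t, ∀ c : H, μ {ω | X t ω = c} = (N : ENNReal)⁻¹)
    (B : Finset H) (t : ℕ) :
    (μ (⋂ s ∈ Finset.Icc 1 t, X s ⁻¹' (↑B)ᶜ)).toReal
      = (((N : ℝ) - B.card) / N) ^ t := by
  have hle : B.card ≤ N := hcard ▸ B.card_le_univ
  rw [meas_unseen hcard hmeas hindep hunif, ENNReal.toReal_pow, ENNReal.toReal_mul,
    ENNReal.toReal_inv]
  rw [ENNReal.toReal_natCast, ENNReal.toReal_natCast, Nat.cast_sub hle, div_eq_mul_inv]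


private lemma meas_Et [DecidableEq H] (hcard : Fintype.card H = N)
    (hmeas : ∀ t, Measurable (X t))
    (hindep : iIndepFun X μ)
    (hunif : ∀ t, ∀ c : H, μ {ω | X t ω = c} = (N : ENNReal)⁻¹)
    {r : ℕ} (A : Fin r → Finset H)
    (hdisj : Pairwise fun i j => Disjoint (A i) (A j)) (t : ℕ) :
    (μ {ω | ∀ i, ∃ a ∈ A i, ∀ s ∈ Finset.Icc 1 t, X s ω ≠ a}).toReal
      = ∑ γ ∈ Fintype.piFinset (fun i => (A i).powerset.erase ∅),
          (∏ i, (-1 : ℝ) ^ ((γ i).card + 1)) *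
            (((N : ℝ) - (Finset.univ.biUnion γ).card) / N) ^ t := by
  classical
  set D : (i : Fin r) → Finset (Finset H) := fun i => (A i).powerset.erase ∅ with hD
  set E : Set Ω := {ω | ∀ i, ∃ a ∈ A i, ∀ s ∈ Finset.Icc 1 t, X s ω ≠ a} with hE
  set K : ((i : Fin r) → Finset H) → Set Ω :=
    fun γ => ⋂ s ∈ Finset.Icc 1 t, X s ⁻¹' (↑(Finset.univ.biUnion γ) : Set H)ᶜ with hK
  have hEmeas : MeasurableSet E := by
    have : E = ⋂ i, ⋃ a ∈ (A i : Set H), ⋂ s ∈ (Finset.Icc 1 t : Set ℕ),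
        (X s ⁻¹' {a})ᶜ := by
      ext ω
      simp only [hE, Set.mem_setOf_eq, Set.mem_iInter, Set.mem_iUnion, Set.mem_compl_iff,
        Set.mem_preimage, Set.mem_singleton_iff, Finset.mem_coe, exists_prop]
    rw [this]
    exact MeasurableSet.iInter fun i => MeasurableSet.biUnion (A i).countable_toSet
      fun a _ => MeasurableSet.biInter (Set.to_countable _)
        fun s _ => (hmeas s (measurableSet_singleton a)).compl
  have hKmeas : ∀ γ, MeasurableSet (K γ) := fun γ =>
    MeasurableSet.biInter (Set.to_countable _)
      fun s _ => hmeas s (Finset.measurableSet _).compl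
  -- pointwise identity
  have hpt : ∀ ω, Set.indicator E (fun _ => (1 : ℝ)) ω
      = ∑ γ ∈ Fintype.piFinset D,
          (∏ i, (-1 : ℝ) ^ ((γ i).card + 1)) *
            Set.indicator (K γ) (fun _ => (1 : ℝ)) ω := by
    intro ω
    set Y : H → ℝ := fun a => ∏ s ∈ Finset.Icc 1 t, (if X s ω = a then (0:ℝ) else 1) with hY
    have hYval : ∀ a, Y a = if (∃ s ∈ Finset.Icc 1 t, X s ω = a) then (0:ℝ) else 1 := by
      intro a
      by_cases h : ∃ s ∈ Finset.Icc 1 t, X s ω = a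
      · obtain ⟨s, hs, hsa⟩ := h
        rw [if_pos ⟨s, hs, hsa⟩]
        exact Finset.prod_eq_zero hs (by simp [hsa])
      · rw [if_neg h]
        exact Finset.prod_eq_one fun s hs => by
          rw [if_neg (fun hc => h ⟨s, hs, hc⟩)]
    have hleft : Set.indicator E (fun _ => (1 : ℝ)) ω
        = ∏ i, (1 - ∏ a ∈ A i, (1 - Y a)) := by
      have hfac : ∀ i : Fin r, (1 - ∏ a ∈ A i, (1 - Y a))
          = if (∃ a ∈ A i, ∀ s ∈ Finset.Icc 1 t, X s ω ≠ a) then (1:ℝ) else 0 := by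
        intro i
        have hprod : ∏ a ∈ A i, (1 - Y a)
            = if (∀ a ∈ A i, ∃ s ∈ Finset.Icc 1 t, X s ω = a) then (1:ℝ) else 0 := by
          by_cases h : ∀ a ∈ A i, ∃ s ∈ Finset.Icc 1 t, X s ω = a
          · rw [if_pos h]
            exact Finset.prod_eq_one fun a ha => by rw [hYval a, if_pos (h a ha)]; ring
          · rw [if_neg h]
            push_neg at h
            obtain ⟨a, ha, hno⟩ := h
            refine Finset.prod_eq_zero ha ?_
            rw [hYval a, if_neg (by push_neg; exact fun s hs => hno s hs)]
            ring
        rw [hprod]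
        by_cases h : ∀ a ∈ A i, ∃ s ∈ Finset.Icc 1 t, X s ω = a
        · rw [if_pos h, if_neg, sub_self]
          rintro ⟨a, ha, hall⟩
          obtain ⟨s, hs, he⟩ := h a ha
          exact hall s hs he
        · rw [if_neg h, if_pos, sub_zero]
          push_neg at h
          obtain ⟨a, ha, hno⟩ := h
          exact ⟨a, ha, hno⟩
      rw [show (∏ i, (1 - ∏ a ∈ A i, (1 - Y a)))
          = ∏ i, (if (∃ a ∈ A i, ∀ s ∈ Finset.Icc 1 t, X s ω ≠ a) then (1:ℝ) else 0)
          from Finset.prod_congr rfl fun i _ => hfac i]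
      by_cases hω : ω ∈ E
      · rw [Set.indicator_of_mem hω]
        exact (Finset.prod_eq_one fun i _ => if_pos (hω i)).symm
      · rw [Set.indicator_of_notMem hω]
        have hω' : ¬ ∀ i, ∃ a ∈ A i, ∀ s ∈ Finset.Icc 1 t, X s ω ≠ a := hω
        push_neg at hω'
        obtain ⟨i, hi⟩ := hω'
        have hni : ¬ (∃ a ∈ A i, ∀ s ∈ Finset.Icc 1 t, X s ω ≠ a) := by
          push_neg
          exact hi
        exact (Finset.prod_eq_zero (Finset.mem_univ i)
          (if_neg hni : (if (∃ a ∈ A i, ∀ s ∈ Finset.Icc 1 t, X s ω ≠ a)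
            then (1:ℝ) else 0) = 0)).symm
    have hright : ∀ γ ∈ Fintype.piFinset D,
        (∏ i, ∏ a ∈ γ i, Y a) = Set.indicator (K γ) (fun _ => (1:ℝ)) ω := by
      intro γ hγ
      have hγsub : ∀ i, γ i ⊆ A i := fun i =>
        Finset.mem_powerset.mp (Finset.mem_of_mem_erase ((Fintype.mem_piFinset.mp hγ) i))
      have hpd : (↑(Finset.univ : Finset (Fin r)) : Set (Fin r)).PairwiseDisjoint γ :=
        fun i _ j _ hij =>
          Disjoint.mono (Finset.le_iff_subset.mpr (hγsub i)) (Finset.le_iff_subset.mpr (hγsub j))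
            (hdisj hij)
      set B : Finset H := Finset.univ.biUnion γ with hB
      calc ∏ i, ∏ a ∈ γ i, Y a = ∏ a ∈ B, Y a := (Finset.prod_biUnion hpd).symm
        _ = ∏ s ∈ Finset.Icc 1 t, ∏ a ∈ B, (if X s ω = a then (0:ℝ) else 1) :=
            Finset.prod_comm
        _ = ∏ s ∈ Finset.Icc 1 t, (if X s ω ∈ B then (0:ℝ) else 1) := by
            refine Finset.prod_congr rfl fun s _ => ?_
            by_cases h : X s ω ∈ B
            · rw [if_pos h]
              exact Finset.prod_eq_zero h (if_pos rfl)
            · rw [if_neg h]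
              exact Finset.prod_eq_one fun a ha => if_neg fun he => h (by rw [he]; exact ha)
        _ = Set.indicator (K γ) (fun _ => (1:ℝ)) ω := by
            by_cases hωK : ω ∈ K γ
            · rw [Set.indicator_of_mem hωK]
              refine Finset.prod_eq_one fun s hs => ?_
              have := Set.mem_iInter₂.mp hωK s hs
              simp only [Set.mem_preimage, Set.mem_compl_iff, Finset.mem_coe] at this
              exact if_neg this
            · rw [Set.indicator_of_notMem hωK]
              have : ∃ s ∈ Finset.Icc 1 t, X s ω ∈ B := by
                by_contra hc
                push_neg at hc
                exact hωK (Set.mem_iInter₂.mpr fun s hs => by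
                  simp only [Set.mem_preimage, Set.mem_compl_iff, Finset.mem_coe]
                  exact hc s hs)
              obtain ⟨s, hs, hmem⟩ := this
              exact Finset.prod_eq_zero hs (if_pos hmem)
    rw [hleft, alg_expand A Y]
    exact Finset.sum_congr rfl fun γ hγ => by rw [hright γ hγ]
  -- integrate
  calc (μ E).toReal
      = ∫ ω, Set.indicator E (fun _ => (1:ℝ)) ω ∂μ := (integral_indicator_one hEmeas).symm
    _ = ∫ ω, (∑ γ ∈ Fintype.piFinset D,
          (∏ i, (-1 : ℝ) ^ ((γ i).card + 1)) *
            Set.indicator (K γ) (fun _ => (1 : ℝ)) ω) ∂μ :=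
        integral_congr_ae (Filter.Eventually.of_forall hpt)
    _ = ∑ γ ∈ Fintype.piFinset D, ∫ ω, (∏ i, (-1 : ℝ) ^ ((γ i).card + 1)) *
            Set.indicator (K γ) (fun _ => (1 : ℝ)) ω ∂μ :=
        integral_finset_sum _ (fun γ _ =>
          (((integrable_const (1:ℝ)).indicator (hKmeas γ)).const_mul _))
    _ = ∑ γ ∈ Fintype.piFinset D, (∏ i, (-1 : ℝ) ^ ((γ i).card + 1)) * (μ (K γ)).toReal := by
        refine Finset.sum_congr rfl fun γ _ => ?_
        rw [integral_const_mul]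
        congr 1
        exact integral_indicator_one (hKmeas γ)
    _ = _ := by
        refine Finset.sum_congr rfl fun γ _ => ?_
        rw [meas_unseen_toReal hcard hmeas hindep hunif]

private lemma lt_collectTime_iff {ω : Ω} {B : Finset H} {t : ℕ} :
    t < collectTime X (↑B) ω ↔
      ((∃ t', ∀ a ∈ B, ∃ s, 1 ≤ s ∧ s ≤ t' ∧ X s ω = a) ∧
        ¬(∀ a ∈ B, ∃ s, 1 ≤ s ∧ s ≤ t ∧ X s ω = a)) := by
  have hSdef : ∀ t' : ℕ, (t' ∈ {u : ℕ | ∀ a ∈ (↑B : Set H), ∃ s, 1 ≤ s ∧ s ≤ u ∧ X s ω = a})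
      ↔ (∀ a ∈ B, ∃ s, 1 ≤ s ∧ s ≤ t' ∧ X s ω = a) := by
    intro t'
    simp [Set.mem_setOf_eq]
  constructor
  · intro h
    have hne : {u : ℕ | ∀ a ∈ (↑B : Set H), ∃ s, 1 ≤ s ∧ s ≤ u ∧ X s ω = a}.Nonempty := by
      by_contra hS
      rw [Set.not_nonempty_iff_eq_empty] at hS
      have : collectTime X (↑B) ω = 0 := by
        unfold collectTime
        rw [hS, Nat.sInf_empty]
      omega
    obtain ⟨t', ht'⟩ := hne
    refine ⟨⟨t', (hSdef t').mp ht'⟩, fun hmem => ?_⟩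
    have : collectTime X (↑B) ω ≤ t := Nat.sInf_le ((hSdef t).mpr hmem)
    omega
  · rintro ⟨⟨t', ht'⟩, hnot⟩
    by_contra hle
    push_neg at hle
    have hne : {u : ℕ | ∀ a ∈ (↑B : Set H), ∃ s, 1 ≤ s ∧ s ≤ u ∧ X s ω = a}.Nonempty :=
      ⟨t', (hSdef t').mpr ht'⟩
    have hmem := Nat.sInf_mem hne
    refine hnot fun a ha => ?_
    obtain ⟨s, h1, h2, h3⟩ := (hSdef _).mp hmem a ha
    exact ⟨s, h1, le_trans h2 hle, h3⟩

private lemma never_seen_null (hN : 1 ≤ N) (hcard : Fintype.card H = N)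
    (hmeas : ∀ t, Measurable (X t))
    (hindep : iIndepFun X μ)
    (hunif : ∀ t, ∀ c : H, μ {ω | X t ω = c} = (N : ENNReal)⁻¹)
    (a : H) :
    μ {ω | ∀ s, 1 ≤ s → X s ω ≠ a} = 0 := by
  classical
  set Z := {ω | ∀ s, 1 ≤ s → X s ω ≠ a} with hZ
  have hsub : ∀ t : ℕ, Z ⊆ ⋂ s ∈ Finset.Icc 1 t, X s ⁻¹' (↑({a} : Finset H) : Set H)ᶜ := by
    intro t ω hω
    refine Set.mem_iInter₂.mpr fun s hs => ?_
    simp only [Set.mem_preimage, Set.mem_compl_iff, Finset.coe_singleton,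
      Set.mem_singleton_iff]
    exact hω s (Finset.mem_Icc.mp hs).1
  have hbound : ∀ t : ℕ, (μ Z).toReal ≤ (((N : ℝ) - 1) / N) ^ t := by
    intro t
    have h1 : (μ Z).toReal ≤ (μ (⋂ s ∈ Finset.Icc 1 t,
        X s ⁻¹' (↑({a} : Finset H) : Set H)ᶜ)).toReal :=
      ENNReal.toReal_mono (measure_ne_top μ _) (measure_mono (hsub t))
    have h2 := meas_unseen_toReal (μ := μ) hcard hmeas hindep hunif ({a} : Finset H) t
    rw [Finset.card_singleton, Nat.cast_one] at h2
    exact h1.trans_eq h2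
  have hq0 : (0:ℝ) ≤ ((N : ℝ) - 1) / N := by
    apply div_nonneg
    · have : (1:ℝ) ≤ N := by exact_mod_cast hN
      linarith
    · positivity
  have hq1 : ((N : ℝ) - 1) / N < 1 := by
    rw [div_lt_one (by positivity : (0:ℝ) < N)]
    linarith
  have htend := tendsto_pow_atTop_nhds_zero_of_lt_one hq0 hq1
  have hle0 : (μ Z).toReal ≤ 0 := ge_of_tendsto' htend fun t => hbound t
  have : (μ Z).toReal = 0 := le_antisymm hle0 ENNReal.toReal_nonneg
  exact (ENNReal.toReal_eq_zero_iff _).mp this |>.resolve_right (measure_ne_top μ _)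

private lemma lintegral_nat_eq (f : Ω → ℕ)
    (hmf : ∀ t : ℕ, MeasurableSet {ω | t < f ω}) :
    ∫⁻ ω, (f ω : ℝ≥0∞) ∂μ = ∑' t : ℕ, μ {ω | t < f ω} := by
  have key : ∀ ω, ((f ω : ℝ≥0∞))
      = ∑' t : ℕ, Set.indicator {ω' | t < f ω'} (fun _ => (1:ℝ≥0∞)) ω := by
    intro ω
    have h1 : ∀ t : ℕ, Set.indicator {ω' | t < f ω'} (fun _ => (1:ℝ≥0∞)) ω
        = if t ∈ Finset.range (f ω) then (1:ℝ≥0∞) else 0 := by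
      intro t
      simp [Set.indicator_apply, Finset.mem_range]
    rw [tsum_congr h1, tsum_eq_sum (s := Finset.range (f ω)) (fun b hb => if_neg hb),
      Finset.sum_congr rfl fun b hb => if_pos hb, Finset.sum_const, Finset.card_range,
      nsmul_eq_mul, mul_one]
  calc ∫⁻ ω, (f ω : ℝ≥0∞) ∂μ
      = ∫⁻ ω, ∑' t : ℕ, Set.indicator {ω' | t < f ω'} (fun _ => (1:ℝ≥0∞)) ω ∂μ :=
        lintegral_congr key
    _ = ∑' t : ℕ, ∫⁻ ω, Set.indicator {ω' | t < f ω'} (fun _ => (1:ℝ≥0∞)) ω ∂μ :=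
        lintegral_tsum fun t => (measurable_const.indicator (hmf t)).aemeasurable
    _ = ∑' t : ℕ, μ {ω | t < f ω} := by
        refine tsum_congr fun t => ?_
        rw [lintegral_indicator (hmf t)]
        simp

private lemma integral_side {H : Type*} [DecidableEq H] [Fintype H]
    {r : ℕ} (hr : 0 < r) (A : Fin r → Finset H)
    (hdisj : Pairwise fun i j => Disjoint (A i) (A j)) :
    ∫ u in (0:ℝ)..1, (1/(1-u)) * ∏ i, (1 - u ^ ((A i).card))
      = ∑ γ ∈ Fintype.piFinset (fun i => (A i).powerset.erase ∅),
          (∏ i, (-1 : ℝ) ^ ((γ i).card + 1)) *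
            (1 / ((Finset.univ.biUnion γ).card : ℝ)) := by
  classical
  set D : (i : Fin r) → Finset (Finset H) := fun i => (A i).powerset.erase ∅ with hD
  have hdisjγ : ∀ γ ∈ Fintype.piFinset D,
      ∀ x ∈ (Finset.univ : Finset (Fin r)), ∀ y ∈ (Finset.univ : Finset (Fin r)),
        x ≠ y → Disjoint (γ x) (γ y) := by
    intro γ hγ x _ y _ hxy
    have hsub : ∀ i, γ i ⊆ A i := fun i =>
      Finset.mem_powerset.mp (Finset.mem_of_mem_erase ((Fintype.mem_piFinset.mp hγ) i))
    exact Disjoint.mono (Finset.le_iff_subset.mpr (hsub x)) (Finset.le_iff_subset.mpr (hsub y))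
      (hdisj hxy)
  have hk1 : ∀ γ ∈ Fintype.piFinset D, 1 ≤ (Finset.univ.biUnion γ).card := by
    intro γ hγ
    have h0 : γ ⟨0, hr⟩ ≠ ∅ := Finset.ne_of_mem_erase ((Fintype.mem_piFinset.mp hγ) ⟨0, hr⟩)
    have hsub : γ ⟨0, hr⟩ ⊆ Finset.univ.biUnion γ :=
      Finset.subset_biUnion_of_mem γ (Finset.mem_univ (⟨0, hr⟩ : Fin r))
    have := Finset.card_le_card hsub
    have hpos : 0 < (γ ⟨0, hr⟩).card := Finset.card_pos.mpr (Finset.nonempty_iff_ne_empty.mpr h0)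
    omega
  have h1 : ∀ u : ℝ, ∏ i, (1 - u ^ ((A i).card))
      = ∑ γ ∈ Fintype.piFinset D,
          (∏ i, (-1 : ℝ) ^ ((γ i).card + 1)) * (1-u) ^ ((Finset.univ.biUnion γ).card) := by
    intro u
    have h := alg_expand A (fun _ => (1 - u : ℝ))
    simp only [sub_sub_cancel, Finset.prod_const] at h
    rw [h]
    refine Finset.sum_congr rfl fun γ hγ => ?_
    congr 1
    rw [Finset.prod_pow_eq_pow_sum]
    congr 1
    exact (Finset.card_biUnion (hdisjγ γ hγ)).symm
  have hpoly : ∀ u : ℝ, u ≠ 1 → (1/(1-u)) * ∏ i, (1 - u ^ ((A i).card))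
      = ∑ γ ∈ Fintype.piFinset D,
          (∏ i, (-1 : ℝ) ^ ((γ i).card + 1)) * (1-u) ^ ((Finset.univ.biUnion γ).card - 1) := by
    intro u hu
    have hne : (1 - u) ≠ 0 := sub_ne_zero.mpr (Ne.symm hu)
    rw [h1 u, Finset.mul_sum]
    refine Finset.sum_congr rfl fun γ hγ => ?_
    rw [show (Finset.univ.biUnion γ).card = ((Finset.univ.biUnion γ).card - 1) + 1 from
      (Nat.succ_pred_eq_of_pos (hk1 γ hγ)).symm]
    rw [Nat.add_sub_cancel, pow_succ]
    field_simp
  have hae : ∀ᵐ u ∂(volume : Measure ℝ), u ∈ Set.uIoc (0:ℝ) 1 →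
      (1/(1-u)) * ∏ i, (1 - u ^ ((A i).card))
        = ∑ γ ∈ Fintype.piFinset D,
            (∏ i, (-1 : ℝ) ^ ((γ i).card + 1)) *
              (1-u) ^ ((Finset.univ.biUnion γ).card - 1) := by
    have h1' : ∀ᵐ u ∂(volume : Measure ℝ), u ≠ 1 := by
      rw [ae_iff]
      have : {u : ℝ | ¬ u ≠ 1} = {1} := by ext u; simp
      rw [this]
      exact Real.volume_singleton
    filter_upwards [h1'] with u hu _
    exact hpoly u hu
  rw [intervalIntegral.integral_congr_ae hae, intervalIntegral.integral_finset_sum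
    (fun γ _ => (Continuous.intervalIntegrable (by continuity) _ _))]
  refine Finset.sum_congr rfl fun γ hγ => ?_
  rw [intervalIntegral.integral_const_mul]
  congr 1
  have hcomp := intervalIntegral.integral_comp_sub_left
    (fun x : ℝ => x ^ ((Finset.univ.biUnion γ).card - 1)) 1 (a := 0) (b := 1)
  norm_num at hcomp
  rw [hcomp, Nat.cast_sub (hk1 γ hγ)]
  norm_num

end Aux

/-- Average delay of first-to-complete alignment among disjoint alignment sets:
for i.i.d. uniform draws from a finite set `H` of size `N ≥ 1` and pairwise disjoint
nonempty subsets `A₁, …, A_r` with `|A_i| = a_i`, the first time `T = min_i σ_{A_i}`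
at which some `A_i` is completely collected satisfies
`E[T] = N · ∫₀¹ (1/(1−u)) · ∏_i (1 − u^{a_i}) du`. -/
theorem expected_delay_first_to_complete
    {Ω : Type*} [MeasurableSpace Ω] (μ : Measure Ω) [IsProbabilityMeasure μ]
    {H : Type*} [Fintype H] [MeasurableSpace H] [MeasurableSingletonClass H]
    (N : ℕ) (hN : 1 ≤ N) (hcard : Fintype.card H = N)
    (X : ℕ → Ω → H) (hmeas : ∀ t, Measurable (X t))
    (hindep : iIndepFun X μ)
    (hunif : ∀ t, ∀ c : H, μ {ω | X t ω = c} = (N : ENNReal)⁻¹)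
    (r : ℕ) (hr : 0 < r) (A : Fin r → Finset H)
    (hA : ∀ i, (A i).Nonempty)
    (hdisj : Pairwise fun i j => Disjoint (A i) (A j)) :
    ∫ ω, ((⨅ i, collectTime X (A i : Set H) ω : ℕ) : ℝ) ∂μ =
      N * ∫ u in (0 : ℝ)..1, (1 / (1 - u)) * ∏ i, (1 - u ^ ((A i).card)) := by
  classical
  haveI : Nonempty (Fin r) := ⟨⟨0, hr⟩⟩
  set T : Ω → ℕ := fun ω => ⨅ i, collectTime X (↑(A i)) ω with hT
  set D : (i : Fin r) → Finset (Finset H) := fun i => (A i).powerset.erase ∅ with hD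
  set c : ((i : Fin r) → Finset H) → ℝ := fun γ => ∏ i, (-1:ℝ)^((γ i).card+1) with hc
  set kB : ((i : Fin r) → Finset H) → ℕ := fun γ => (Finset.univ.biUnion γ).card with hkB
  set E : ℕ → Set Ω :=
    fun t => {ω | ∀ i, ∃ a ∈ A i, ∀ s ∈ Finset.Icc 1 t, X s ω ≠ a} with hEdef
  set Z : Set Ω := ⋃ a : H, {ω | ∀ s, 1 ≤ s → X s ω ≠ a} with hZdef
  have hZ : μ Z = 0 :=
    measure_iUnion_null fun a => never_seen_null hN hcard hmeas hindep hunif a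
  -- basic facts about γ ∈ piFinset D
  have hk1 : ∀ γ ∈ Fintype.piFinset D, 1 ≤ kB γ := by
    intro γ hγ
    have h0 : γ ⟨0, hr⟩ ≠ ∅ := Finset.ne_of_mem_erase ((Fintype.mem_piFinset.mp hγ) ⟨0, hr⟩)
    have hsub : γ ⟨0, hr⟩ ⊆ Finset.univ.biUnion γ :=
      Finset.subset_biUnion_of_mem γ (Finset.mem_univ (⟨0, hr⟩ : Fin r))
    have h1 := Finset.card_le_card hsub
    have hpos : 0 < (γ ⟨0, hr⟩).card :=
      Finset.card_pos.mpr (Finset.nonempty_iff_ne_empty.mpr h0)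
    simp only [hkB]; omega
  have hkN : ∀ γ : (i : Fin r) → Finset H, kB γ ≤ N :=
    fun γ => hcard ▸ Finset.card_le_univ _
  have hq0 : ∀ γ ∈ Fintype.piFinset D, (0:ℝ) ≤ ((N:ℝ) - kB γ)/N := by
    intro γ hγ
    apply div_nonneg _ (by positivity)
    have : (kB γ : ℝ) ≤ N := by exact_mod_cast hkN γ
    linarith
  have hq1 : ∀ γ ∈ Fintype.piFinset D, ((N:ℝ) - kB γ)/N < 1 := by
    intro γ hγ
    rw [div_lt_one (by positivity : (0:ℝ) < N)]
    have : (1:ℝ) ≤ (kB γ : ℝ) := by exact_mod_cast hk1 γ hγ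
    linarith
  -- the per-time formula
  have hEt : ∀ t, (μ (E t)).toReal = ∑ γ ∈ Fintype.piFinset D, c γ * (((N:ℝ) - kB γ)/N)^t :=
    fun t => meas_Et hcard hmeas hindep hunif A hdisj t
  -- measurability of {t < T}
  set M : Fin r → ℕ → Set Ω :=
    fun i t' => {ω | ∀ a ∈ A i, ∃ s, 1 ≤ s ∧ s ≤ t' ∧ X s ω = a} with hM
  have hMmeas : ∀ i t', MeasurableSet (M i t') := by
    intro i t'
    have : M i t' = ⋂ a ∈ (A i : Set H), ⋃ s ∈ Set.Icc 1 t', X s ⁻¹' {a} := by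
      ext ω
      simp [hM, Set.mem_Icc, and_assoc]
    rw [this]
    exact MeasurableSet.biInter (A i).countable_toSet fun a _ =>
      MeasurableSet.biUnion (Set.to_countable _) fun s _ =>
        hmeas s (measurableSet_singleton a)
  have hTset : ∀ t, {ω | t < T ω} = ⋂ i, ((⋃ t' : ℕ, M i t') ∩ (M i t)ᶜ) := by
    intro t
    ext ω
    simp only [Set.mem_setOf_eq, Set.mem_iInter, Set.mem_inter_iff, Set.mem_iUnion,
      Set.mem_compl_iff, hM, hT]
    constructor
    · intro h i
      have hi : t < collectTime X (↑(A i)) ω := lt_of_lt_of_le h (ciInf_le' _ i)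
      exact lt_collectTime_iff.mp hi
    · intro h
      have : ∀ i, t < collectTime X (↑(A i)) ω := fun i => lt_collectTime_iff.mpr (h i)
      exact Nat.lt_of_succ_le (le_ciInf fun i => Nat.succ_le_of_lt (this i))
  have hmeasT : ∀ t, MeasurableSet {ω | t < T ω} := by
    intro t
    rw [hTset t]
    exact MeasurableSet.iInter fun i =>
      ((MeasurableSet.iUnion fun t' => hMmeas i t').inter (hMmeas i t).compl)
  -- a.e. identification of {t < T} with E t
  have hae : ∀ t, μ {ω | t < T ω} = μ (E t) := by
    intro t
    have hsubZ : ∀ ω, ω ∉ Z → (t < T ω ↔ ω ∈ E t) := by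
      intro ω hωZ
      have hωZ' : ∀ a : H, ∃ s, 1 ≤ s ∧ X s ω = a := by
        intro a
        by_contra hc
        push_neg at hc
        exact hωZ (Set.mem_iUnion.mpr ⟨a, fun s hs => hc s hs⟩)
      constructor
      · intro h
        intro i
        have hi : t < collectTime X (↑(A i)) ω := lt_of_lt_of_le h (ciInf_le' _ i)
        have h2 := (lt_collectTime_iff.mp hi).2
        push_neg at h2
        obtain ⟨a, ha, hno⟩ := h2
        refine ⟨a, ha, fun s hs he => ?_⟩
        obtain ⟨h1', h2'⟩ := Finset.mem_Icc.mp hs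
        exact hno s h1' h2' he
      · intro h
        refine Nat.lt_of_succ_le (le_ciInf fun i => Nat.succ_le_of_lt ?_)
        refine lt_collectTime_iff.mpr ⟨?_, ?_⟩
        · choose g hg1 hg2 using hωZ'
          refine ⟨Finset.univ.sup g, fun a _ => ⟨g a, hg1 a, Finset.le_sup (Finset.mem_univ a), hg2 a⟩⟩
        · intro hall
          obtain ⟨a, ha, hno⟩ := h i
          obtain ⟨s, h1', h2', h3'⟩ := hall a ha
          exact hno s (Finset.mem_Icc.mpr ⟨h1', h2'⟩) h3'
    have h1 : {ω | t < T ω} ∩ Zᶜ = E t ∩ Zᶜ := by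
      ext ω
      simp only [Set.mem_inter_iff, Set.mem_compl_iff, Set.mem_setOf_eq]
      constructor
      · rintro ⟨h, hz⟩; exact ⟨(hsubZ ω hz).mp h, hz⟩
      · rintro ⟨h, hz⟩; exact ⟨(hsubZ ω hz).mpr h, hz⟩
    have hZc : μ (Zᶜᶜ) = 0 := by rwa [compl_compl]
    rw [← measure_inter_conull hZc, h1, measure_inter_conull hZc]
  -- series p
  set p : ℕ → ℝ := fun t => ∑ γ ∈ Fintype.piFinset D, c γ * (((N:ℝ) - kB γ)/N)^t with hp
  have hpnn : ∀ t, 0 ≤ p t := by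
    intro t
    have := hEt t
    simp only [hp]
    rw [← this]
    exact ENNReal.toReal_nonneg
  have hsummable : ∀ γ ∈ Fintype.piFinset D,
      Summable (fun t : ℕ => c γ * (((N:ℝ) - kB γ)/N)^t) := fun γ hγ =>
    (summable_geometric_of_lt_one (hq0 γ hγ) (hq1 γ hγ)).mul_left _
  have hpsum : Summable p := summable_sum hsummable
  have htsum : ∑' t : ℕ, p t = ∑ γ ∈ Fintype.piFinset D, c γ * ((N:ℝ)/(kB γ)) := by
    rw [hp, Summable.tsum_finsetSum hsummable]
    refine Finset.sum_congr rfl fun γ hγ => ?_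
    rw [tsum_mul_left, tsum_geometric_of_lt_one (hq0 γ hγ) (hq1 γ hγ)]
    congr 1
    have hN0 : (N:ℝ) ≠ 0 := by positivity
    rw [show (1:ℝ) - ((N:ℝ) - kB γ)/N = (kB γ)/N from by field_simp; ring, inv_div]
  -- measurability of T and the cast
  have hTm : Measurable T := by
    apply measurable_to_countable'
    intro n
    match n with
    | 0 =>
      have : T ⁻¹' {0} = {ω | 0 < T ω}ᶜ := by
        ext ω; simp [Nat.pos_iff_ne_zero]
      rw [this]
      exact (hmeasT 0).compl
    | (n+1) =>
      have : T ⁻¹' {n+1} = {ω | n < T ω} ∩ {ω | n+1 < T ω}ᶜ := by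
        ext ω
        simp only [Set.mem_preimage, Set.mem_singleton_iff, Set.mem_inter_iff,
          Set.mem_setOf_eq, Set.mem_compl_iff]
        omega
      rw [this]
      exact (hmeasT n).inter (hmeasT (n+1)).compl
  have hcastm : Measurable fun ω => ((T ω : ℝ)) :=
    Measurable.comp measurable_from_top hTm
  -- LHS chain
  have hLHS : ∫ ω, ((T ω : ℕ) : ℝ) ∂μ = ∑' t : ℕ, p t := by
    rw [integral_eq_lintegral_of_nonneg_ae
      (Filter.Eventually.of_forall fun ω => Nat.cast_nonneg _) hcastm.aestronglyMeasurable]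
    have h1 : ∫⁻ ω, ENNReal.ofReal ((T ω : ℝ)) ∂μ = ∫⁻ ω, ((T ω : ℕ) : ℝ≥0∞) ∂μ :=
      lintegral_congr fun ω => ENNReal.ofReal_natCast _
    rw [h1, lintegral_nat_eq T hmeasT]
    have h2 : ∀ t : ℕ, μ {ω | t < T ω} = ENNReal.ofReal (p t) := by
      intro t
      rw [hae t, ← ENNReal.ofReal_toReal (measure_ne_top μ (E t)), hEt t]
    rw [tsum_congr h2, ← ENNReal.ofReal_tsum_of_nonneg hpnn hpsum,
      ENNReal.toReal_ofReal (tsum_nonneg hpnn)]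
  rw [hLHS, htsum, integral_side hr A hdisj, Finset.mul_sum]
  refine Finset.sum_congr rfl fun γ hγ => ?_
  ring
end

section
/- Let H be a finite set with |H| = N ≥ 1, let (X_t)_{t≥1} be i.i.d. uniform draws from H, and let A₁, …, A_r ⊆ H be pairwise disjoint nonempty subsets with |A_i| = a_i. Let T = min_{1≤i≤r} σ_{A_i}. Then E[T] = N · Σ_{∅ ≠ U ⊆ {1,…,r}} (−1)^{1−|U|} · H_{Σ_{i∈U} a_i}, where H_n = Σ_{j=1}^{n} 1/j is the n-th harmonic number. -/
open MeasureTheory ProbabilityTheory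
open scoped ENNReal NNReal

/-- The `n`-th harmonic number `H_n = ∑_{j=1}^n 1/j`, as a real number. -/
noncomputable def harm (n : ℕ) : ℝ := ∑ j ∈ Finset.range n, (1 : ℝ) / (j + 1)

namespace CExp

variable {Ω : Type*} [MeasurableSpace Ω] (μ : Measure Ω) [IsProbabilityMeasure μ]
variable {H : Type*} [Fintype H] [MeasurableSpace H] [MeasurableSingletonClass H]
variable [DecidableEq H]
variable (X : ℕ → Ω → H)

set_option linter.unusedSectionVars false

/-- The event that every element of `B` has been seen by time `t`. -/
def Cov (B : Finset H) (t : ℕ) : Set Ω :=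
  {ω | ∀ b ∈ B, ∃ s, 1 ≤ s ∧ s ≤ t ∧ X s ω = b}

/-- The event that no element of `S` has been seen by time `t`. -/
def Avd (S : Finset H) (t : ℕ) : Set Ω :=
  ⋂ s ∈ Finset.Icc 1 t, X s ⁻¹' ↑Sᶜ

lemma cov_eq (B : Finset H) (t : ℕ) :
    Cov X B t = ⋂ b ∈ B, ⋃ s ∈ Finset.Icc 1 t, X s ⁻¹' {b} := by
  ext ω
  simp [Cov, Finset.mem_Icc, and_assoc]

variable {X}

lemma measurableSet_cov (hmeas : ∀ t, Measurable (X t)) (B : Finset H) (t : ℕ) :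
    MeasurableSet (Cov X B t) := by
  rw [cov_eq]
  exact MeasurableSet.biInter (Set.to_countable _) fun b _ =>
    MeasurableSet.biUnion (Set.to_countable _) fun s _ =>
      (hmeas s) (measurableSet_singleton b)

lemma measurableSet_avd (hmeas : ∀ t, Measurable (X t)) (S : Finset H) (t : ℕ) :
    MeasurableSet (Avd X S t) :=
  MeasurableSet.biInter (Set.to_countable _) fun s _ => (hmeas s) (Sᶜ.measurableSet)

lemma cov_mono (B : Finset H) {t t' : ℕ} (h : t ≤ t') : Cov X B t ⊆ Cov X B t' := by
  intro ω hω b hb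
  obtain ⟨s, h1, h2, h3⟩ := hω b hb
  exact ⟨s, h1, h2.trans h, h3⟩

lemma cov_biUnion {r : ℕ} (A : Fin r → Finset H) (U : Finset (Fin r)) (t : ℕ) :
    Cov X (U.biUnion A) t = ⋂ i ∈ U, Cov X (A i) t := by
  ext ω
  simp only [Cov, Set.mem_setOf_eq, Set.mem_iInter, Finset.mem_biUnion]
  constructor
  · intro h i hi b hb
    exact h b ⟨i, hi, hb⟩
  · rintro h b ⟨i, hi, hb⟩
    exact h i hi b hb

lemma avd_eq_iInter (S : Finset H) (t : ℕ) :
    Avd X S t = ⋂ b ∈ S, Avd X {b} t := by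
  ext ω
  simp only [Avd, Set.mem_iInter, Set.mem_preimage, Finset.coe_compl, Set.mem_compl_iff,
    Finset.mem_coe, Finset.mem_singleton]
  constructor
  · intro h b hb s hs
    exact fun he => (h s hs) (he ▸ hb)
  · intro h s hs hmem
    exact h (X s ω) hmem s hs rfl

lemma compl_avd_singleton (b : H) (t : ℕ) :
    (Avd X {b} t)ᶜ = ⋃ s ∈ Finset.Icc 1 t, X s ⁻¹' {b} := by
  ext ω
  simp [Avd]

lemma cov_eq_iInter_compl_avd (B : Finset H) (t : ℕ) :
    Cov X B t = ⋂ b ∈ B, (Avd X {b} t)ᶜ := by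
  rw [cov_eq]
  refine Set.iInter₂_congr fun b _ => ?_
  rw [compl_avd_singleton]

/-- Inclusion–exclusion for measures, in the "product of complements" form. -/
lemma meas_iInter_compl {ι : Type*} [DecidableEq ι] (s : Finset ι) (E : ι → Set Ω)
    (hE : ∀ i, MeasurableSet (E i)) :
    (μ (⋂ i ∈ s, (E i)ᶜ)).toReal
      = ∑ U ∈ s.powerset, (-1 : ℝ) ^ U.card * (μ (⋂ i ∈ U, E i)).toReal := by
  classical
  have hU : ∀ U : Finset ι, MeasurableSet (⋂ i ∈ U, E i) := fun U =>
    MeasurableSet.biInter (Finset.countable_toSet _) fun i _ => hE i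
  have hC : MeasurableSet (⋂ i ∈ s, (E i)ᶜ) :=
    MeasurableSet.biInter (Finset.countable_toSet _) fun i _ => (hE i).compl
  have key : ∀ ω : Ω, (⋂ i ∈ s, (E i)ᶜ).indicator (fun _ => (1:ℝ)) ω
      = ∑ U ∈ s.powerset, (-1 : ℝ) ^ U.card * (⋂ i ∈ U, E i).indicator (fun _ => (1:ℝ)) ω := by
    intro ω
    have h1 : ∀ T : Finset ι, (⋂ i ∈ T, E i).indicator (fun _ => (1:ℝ)) ω
        = ∏ i ∈ T, (if ω ∈ E i then (1:ℝ) else 0) := by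
      intro T
      rw [Finset.prod_boole]
      by_cases h : ω ∈ ⋂ i ∈ T, E i
      · rw [Set.indicator_of_mem h, if_pos (by simpa [Set.mem_iInter] using h)]
      · rw [Set.indicator_of_notMem h, if_neg (by simpa [Set.mem_iInter] using h)]
    have h2 : (⋂ i ∈ s, (E i)ᶜ).indicator (fun _ => (1:ℝ)) ω
        = ∏ i ∈ s, ((1:ℝ) - (if ω ∈ E i then (1:ℝ) else 0)) := by
      have : ∀ i : ι, (1:ℝ) - (if ω ∈ E i then (1:ℝ) else 0)
          = (if ω ∉ E i then (1:ℝ) else 0) := by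
        intro i; by_cases h : ω ∈ E i <;> simp [h]
      rw [Finset.prod_congr rfl fun i _ => this i, Finset.prod_boole]
      by_cases h : ω ∈ ⋂ i ∈ s, (E i)ᶜ
      · rw [Set.indicator_of_mem h, if_pos (by simpa [Set.mem_iInter] using h)]
      · rw [Set.indicator_of_notMem h, if_neg (by simpa [Set.mem_iInter] using h)]
    rw [h2, Finset.prod_sub]
    refine Finset.sum_congr rfl fun U hUs => ?_
    rw [h1]
    simp [mul_assoc]
  calc (μ (⋂ i ∈ s, (E i)ᶜ)).toReal
      = ∫ ω, (⋂ i ∈ s, (E i)ᶜ).indicator (fun _ => (1:ℝ)) ω ∂μ := by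
        rw [integral_indicator_const (1:ℝ) hC, smul_eq_mul, mul_one, measureReal_def]
    _ = ∫ ω, ∑ U ∈ s.powerset, (-1 : ℝ) ^ U.card
          * (⋂ i ∈ U, E i).indicator (fun _ => (1:ℝ)) ω ∂μ := by
        exact integral_congr_ae (Filter.Eventually.of_forall key)
    _ = ∑ U ∈ s.powerset, (-1 : ℝ) ^ U.card * (μ (⋂ i ∈ U, E i)).toReal := by
        rw [integral_finset_sum _ fun U _ =>
          (((integrable_const (1:ℝ)).indicator (hU U)).const_mul _)]
        refine Finset.sum_congr rfl fun U _ => ?_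
        rw [integral_const_mul, integral_indicator_const (1:ℝ) (hU U), smul_eq_mul, mul_one, measureReal_def]

lemma toReal_compl {s : Set Ω} (hs : MeasurableSet s) :
    (μ sᶜ).toReal = 1 - (μ s).toReal := by
  rw [prob_compl_eq_one_sub hs, ENNReal.toReal_sub_of_le prob_le_one ENNReal.one_ne_top,
    ENNReal.toReal_one]

variable (N : ℕ)

lemma meas_avd (hN : 1 ≤ N) (hcard : Fintype.card H = N)
    (hmeas : ∀ t, Measurable (X t))
    (hindep : iIndepFun X μ)
    (hunif : ∀ t, ∀ c : H, μ {ω | X t ω = c} = (N : ENNReal)⁻¹)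
    (S : Finset H) (t : ℕ) :
    μ (Avd X S t) = (((Sᶜ.card : ENNReal)) * (N : ENNReal)⁻¹) ^ t := by
  have h1 : ∀ s : ℕ, μ (X s ⁻¹' ↑Sᶜ) = (Sᶜ.card : ENNReal) * (N : ENNReal)⁻¹ := by
    intro s
    have he : X s ⁻¹' ↑Sᶜ = ⋃ c ∈ Sᶜ, X s ⁻¹' {c} := by
      ext ω; simp
    rw [he, measure_biUnion_finset ?_ fun c _ => (hmeas s) (measurableSet_singleton c)]
    · have : ∀ c : H, X s ⁻¹' {c} = {ω | X s ω = c} := fun c => rfl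
      simp_rw [this, hunif s]
      rw [Finset.sum_const, nsmul_eq_mul]
    · intro c _ d _ hcd
      exact (Set.disjoint_singleton.mpr hcd).preimage (X s)
  have h2 := hindep.meas_biInter (S := Finset.Icc 1 t) (s := fun s => X s ⁻¹' ↑Sᶜ)
    (fun s _ => ⟨↑Sᶜ, Sᶜ.measurableSet, rfl⟩)
  rw [Avd, h2, Finset.prod_congr rfl fun s _ => h1 s, Finset.prod_const, Nat.card_Icc]
  norm_num

lemma meas_avd_toReal (hN : 1 ≤ N) (hcard : Fintype.card H = N)
    (hmeas : ∀ t, Measurable (X t))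
    (hindep : iIndepFun X μ)
    (hunif : ∀ t, ∀ c : H, μ {ω | X t ω = c} = (N : ENNReal)⁻¹)
    (S : Finset H) (t : ℕ) :
    (μ (Avd X S t)).toReal = ((Sᶜ.card : ℝ) / N) ^ t := by
  rw [meas_avd μ N hN hcard hmeas hindep hunif S t, ENNReal.toReal_pow, ENNReal.toReal_mul,
    ENNReal.toReal_inv]
  norm_num [div_eq_mul_inv]

lemma avd_empty (t : ℕ) : Avd X (∅ : Finset H) t = Set.univ := by
  simp [Avd]

lemma meas_cov_compl (hN : 1 ≤ N) (hcard : Fintype.card H = N)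
    (hmeas : ∀ t, Measurable (X t))
    (hindep : iIndepFun X μ)
    (hunif : ∀ t, ∀ c : H, μ {ω | X t ω = c} = (N : ENNReal)⁻¹)
    (B : Finset H) (t : ℕ) :
    (μ (Cov X B t)ᶜ).toReal = ∑ S ∈ B.powerset.filter (fun S => S.Nonempty),
      (-1 : ℝ) ^ (S.card + 1) * ((Sᶜ.card : ℝ) / N) ^ t := by
  have hcov : (μ (Cov X B t)).toReal
      = ∑ S ∈ B.powerset, (-1 : ℝ) ^ S.card * (μ (Avd X S t)).toReal := by
    rw [cov_eq_iInter_compl_avd,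
      meas_iInter_compl μ B (fun b => Avd X {b} t) (fun b => measurableSet_avd hmeas _ t)]
    refine Finset.sum_congr rfl fun S _ => ?_
    rw [← avd_eq_iInter]
  have hsplit : ∑ S ∈ B.powerset, (-1 : ℝ) ^ S.card * (μ (Avd X S t)).toReal
      = (∑ S ∈ B.powerset.filter (fun S => S.Nonempty),
          (-1 : ℝ) ^ S.card * (μ (Avd X S t)).toReal) + 1 := by
    rw [← Finset.sum_filter_add_sum_filter_not B.powerset (fun S => S.Nonempty)]
    congr 1
    have : B.powerset.filter (fun S => ¬ S.Nonempty) = {∅} := by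
      ext S
      simp only [Finset.mem_filter, Finset.mem_powerset, Finset.not_nonempty_iff_eq_empty,
        Finset.mem_singleton, and_iff_right_iff_imp]
      rintro rfl; exact Finset.empty_subset B
    rw [this, Finset.sum_singleton, avd_empty]
    simp
  rw [toReal_compl μ (measurableSet_cov hmeas B t), hcov, hsplit]
  rw [show ∀ a : ℝ, 1 - (a + 1) = -a by intro a; ring, ← Finset.sum_neg_distrib]
  refine Finset.sum_congr rfl fun S hS => ?_
  rw [meas_avd_toReal μ N hN hcard hmeas hindep hunif S t]
  ring

lemma ratio_lt_one (hN : 1 ≤ N) (hcard : Fintype.card H = N) {S : Finset H}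
    (hS : S.Nonempty) : 0 ≤ ((Sᶜ.card : ℝ) / N) ∧ ((Sᶜ.card : ℝ) / N) < 1 := by
  have hc : Sᶜ.card + S.card = N := by rw [Finset.card_compl_add_card, hcard]
  have hpos := Finset.card_pos.mpr hS
  have h1 : (Sᶜ.card : ℝ) < N := by exact_mod_cast (by omega : Sᶜ.card < N)
  have hN' : (0:ℝ) < N := by positivity
  exact ⟨by positivity, by rw [div_lt_one hN']; exact h1⟩

lemma one_sub_ratio (hN : 1 ≤ N) (hcard : Fintype.card H = N) (S : Finset H) :
    1 - ((Sᶜ.card : ℝ) / N) = (S.card : ℝ) / N := by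
  have hc : Sᶜ.card + S.card = N := by rw [Finset.card_compl_add_card, hcard]
  have hc' : (Sᶜ.card : ℝ) + S.card = N := by exact_mod_cast hc
  have hN' : (N:ℝ) ≠ 0 := by positivity
  field_simp
  linarith

lemma summable_cov_compl (hN : 1 ≤ N) (hcard : Fintype.card H = N)
    (hmeas : ∀ t, Measurable (X t))
    (hindep : iIndepFun X μ)
    (hunif : ∀ t, ∀ c : H, μ {ω | X t ω = c} = (N : ENNReal)⁻¹)
    (B : Finset H) :
    Summable (fun t => (μ (Cov X B t)ᶜ).toReal) := by
  have : (fun t => (μ (Cov X B t)ᶜ).toReal)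
      = fun t => ∑ S ∈ B.powerset.filter (fun S => S.Nonempty),
          (-1 : ℝ) ^ (S.card + 1) * ((Sᶜ.card : ℝ) / N) ^ t := by
    funext t; exact meas_cov_compl μ N hN hcard hmeas hindep hunif B t
  rw [this]
  refine summable_sum fun S hS => ?_
  have hS' : S.Nonempty := (Finset.mem_filter.mp hS).2
  obtain ⟨h0, h1⟩ := ratio_lt_one N hN hcard hS'
  exact (summable_geometric_of_lt_one h0 h1).mul_left _

lemma tsum_cov_compl (hN : 1 ≤ N) (hcard : Fintype.card H = N)
    (hmeas : ∀ t, Measurable (X t))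
    (hindep : iIndepFun X μ)
    (hunif : ∀ t, ∀ c : H, μ {ω | X t ω = c} = (N : ENNReal)⁻¹)
    (B : Finset H) :
    ∑' t, (μ (Cov X B t)ᶜ).toReal
      = ∑ S ∈ B.powerset.filter (fun S => S.Nonempty),
          (-1 : ℝ) ^ (S.card + 1) * ((N : ℝ) / S.card) := by
  have heq : ∀ t : ℕ, (μ (Cov X B t)ᶜ).toReal
      = ∑ S ∈ B.powerset.filter (fun S => S.Nonempty),
          (-1 : ℝ) ^ (S.card + 1) * ((Sᶜ.card : ℝ) / N) ^ t :=
    meas_cov_compl μ N hN hcard hmeas hindep hunif B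
  rw [tsum_congr heq, Summable.tsum_finsetSum (fun S hS => by
    obtain ⟨h0, h1⟩ := ratio_lt_one N hN hcard (Finset.mem_filter.mp hS).2
    exact (summable_geometric_of_lt_one h0 h1).mul_left _)]
  refine Finset.sum_congr rfl fun S hS => ?_
  obtain ⟨h0, h1⟩ := ratio_lt_one N hN hcard (Finset.mem_filter.mp hS).2
  rw [(summable_geometric_of_lt_one h0 h1).tsum_mul_left,
    tsum_geometric_of_lt_one h0 h1, one_sub_ratio N hN hcard S, inv_div]

lemma alt_harm (n : ℕ) :
    ∑ k ∈ Finset.range (n+1), (n.choose k : ℝ) * ((-1 : ℝ)^(k+1) / k) = harm n := by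
  induction n with
  | zero => simp [harm]
  | succ n ih =>
    have hstep : ∑ i ∈ Finset.range (n+1), ((-1 : ℝ))^i * (n+1).choose (i+1) = 1 := by
      have h0 : (∑ m ∈ Finset.range (n + 2), ((-1 : ℝ)) ^ m * ((n+1).choose m : ℝ)) = 0 := by
        have := Int.alternating_sum_range_choose_of_ne (n := n+1) (by omega)
        exact_mod_cast congrArg (fun z : ℤ => (z : ℝ)) this
      rw [Finset.sum_range_succ'] at h0
      have h0' : -∑ i ∈ Finset.range (n + 1), (-1:ℝ) ^ i * (((n+1).choose (i+1)) : ℝ) + 1 = 0 := by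
        simpa [pow_succ] using h0
      linarith
    have hA : ∑ i ∈ Finset.range (n+1), ((n.choose i : ℝ)) * ((-1 : ℝ)^i / (i+1))
        = 1 / (n+1) := by
      have hch : ∀ i : ℕ, (n.choose i : ℝ) / (i+1) = ((n+1).choose (i+1) : ℝ) / (n+1) := by
        intro i
        have := Nat.add_one_mul_choose_eq n i
        have hcast : ((n:ℝ)+1) * (n.choose i : ℝ) = ((n+1).choose (i+1) : ℝ) * ((i:ℝ)+1) := by
          exact_mod_cast this
        rw [div_eq_div_iff (by positivity) (by positivity)]
        linarith [hcast]
      calc ∑ i ∈ Finset.range (n+1), ((n.choose i : ℝ)) * ((-1 : ℝ)^i / (i+1))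
          = ∑ i ∈ Finset.range (n+1), ((-1 : ℝ)^i) * ((n.choose i : ℝ) / (i+1)) := by
            exact Finset.sum_congr rfl fun i _ => by ring
        _ = ∑ i ∈ Finset.range (n+1), ((-1 : ℝ)^i) * (((n+1).choose (i+1) : ℝ) / (n+1)) := by
            exact Finset.sum_congr rfl fun i _ => by rw [hch i]
        _ = (∑ i ∈ Finset.range (n+1), ((-1 : ℝ))^i * (n+1).choose (i+1)) / (n+1) := by
            rw [Finset.sum_div]
            exact Finset.sum_congr rfl fun i _ => by ring
        _ = 1 / (n+1) := by rw [hstep]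
    have hB : ∑ i ∈ Finset.range (n+1), ((n.choose (i+1) : ℝ)) * ((-1 : ℝ)^(i+2) / (i+1))
        = harm n := by
      rw [← ih]
      rw [Finset.sum_range_succ
        (fun i => ((n.choose (i+1) : ℝ)) * ((-1 : ℝ)^(i+2) / ((i:ℝ)+1)))]
      rw [Finset.sum_range_succ' (fun k => (n.choose k : ℝ) * ((-1 : ℝ)^(k+1) / (k:ℝ))) n]
      have e1 : (n.choose (n+1) : ℝ) * ((-1 : ℝ)^(n+2) / ((n:ℝ)+1)) = 0 := by
        simp [Nat.choose_succ_self]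
      have e2 : (n.choose 0 : ℝ) * ((-1 : ℝ)^(0+1) / ((0:ℕ):ℝ)) = 0 := by simp
      rw [e1, add_zero, e2, add_zero]
      refine Finset.sum_congr rfl fun i _ => ?_
      push_cast
      ring_nf
    have expand : ∀ i : ℕ, (((n+1).choose (i+1) : ℕ) : ℝ) * ((-1 : ℝ)^(i+1+1) / ((i:ℝ)+1))
        = ((n.choose i : ℝ)) * ((-1 : ℝ)^i / ((i:ℝ)+1))
          + ((n.choose (i+1) : ℝ)) * ((-1 : ℝ)^(i+2) / ((i:ℝ)+1)) := by
      intro i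
      have hcc : (((n+1).choose (i+1) : ℕ) : ℝ) = (n.choose i : ℝ) + (n.choose (i+1) : ℝ) := by
        rw [Nat.choose_succ_succ]
        push_cast
        ring
      rw [hcc]
      ring
    rw [Finset.sum_range_succ' (fun k => (((n+1).choose k : ℕ) : ℝ) * ((-1 : ℝ)^(k+1) / (k:ℝ)))
      (n+1)]
    have hz : (((n+1).choose 0 : ℕ) : ℝ) * ((-1 : ℝ)^(0+1) / ((0:ℕ):ℝ)) = 0 := by simp
    rw [hz, add_zero]
    have hmain : ∑ i ∈ Finset.range (n+1),
        (((n+1).choose (i+1) : ℕ) : ℝ) * ((-1 : ℝ)^(i+1+1) / ((i+1 : ℕ):ℝ))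
        = ∑ i ∈ Finset.range (n+1), (((n.choose i : ℝ)) * ((-1 : ℝ)^i / ((i:ℝ)+1))
            + ((n.choose (i+1) : ℝ)) * ((-1 : ℝ)^(i+2) / ((i:ℝ)+1))) := by
      refine Finset.sum_congr rfl fun i _ => ?_
      rw [← expand i]
      push_cast
      ring_nf
    rw [hmain, Finset.sum_add_distrib, hA, hB]
    have hsucc : harm (n+1) = harm n + 1/((n:ℝ)+1) := by
      rw [harm, harm, Finset.sum_range_succ]
    rw [hsucc]
    ring

lemma powerset_harm (B : Finset H) :
    ∑ S ∈ B.powerset.filter (fun S => S.Nonempty),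
        (-1 : ℝ) ^ (S.card + 1) * ((N : ℝ) / S.card)
      = N * harm B.card := by
  have h0 : ∑ S ∈ B.powerset, (-1 : ℝ) ^ (S.card + 1) * ((N : ℝ) / S.card)
      = ∑ S ∈ B.powerset.filter (fun S => S.Nonempty),
          (-1 : ℝ) ^ (S.card + 1) * ((N : ℝ) / S.card) := by
    rw [← Finset.sum_filter_add_sum_filter_not B.powerset (fun S => S.Nonempty)]
    have hemp : B.powerset.filter (fun S => ¬ S.Nonempty) = {∅} := by
      ext S
      simp only [Finset.mem_filter, Finset.mem_powerset, Finset.not_nonempty_iff_eq_empty,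
        Finset.mem_singleton, and_iff_right_iff_imp]
      rintro rfl; exact Finset.empty_subset B
    rw [hemp, Finset.sum_singleton]
    simp
  rw [← h0, Finset.sum_powerset_apply_card
    (f := fun k => (-1 : ℝ) ^ (k + 1) * ((N : ℝ) / k)), ← alt_harm B.card, Finset.mul_sum]
  refine Finset.sum_congr rfl fun k _ => ?_
  rw [nsmul_eq_mul]
  ring

lemma meas_iInter_cov (hmeas : ∀ t, Measurable (X t)) {r : ℕ} (hr : 0 < r)
    (A : Fin r → Finset H) (t : ℕ) :
    (μ (⋂ i ∈ (Finset.univ : Finset (Fin r)), (Cov X (A i) t)ᶜ)).toReal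
      = ∑ U ∈ (Finset.univ : Finset (Fin r)).powerset.filter (fun U => U.Nonempty),
          (-1 : ℝ) ^ (U.card + 1) * (μ (Cov X (U.biUnion A) t)ᶜ).toReal := by
  haveI : Nonempty (Fin r) := ⟨⟨0, hr⟩⟩
  rw [meas_iInter_compl μ Finset.univ (fun i => Cov X (A i) t)
    (fun i => measurableSet_cov hmeas (A i) t)]
  have h1 : ∀ U : Finset (Fin r), (μ (⋂ i ∈ U, Cov X (A i) t)).toReal
      = 1 - (μ (Cov X (U.biUnion A) t)ᶜ).toReal := by
    intro U
    have h2 := toReal_compl μ (measurableSet_cov hmeas (U.biUnion A) t)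
    rw [← cov_biUnion]
    linarith
  rw [Finset.sum_congr rfl fun U _ => by rw [h1 U]]
  have step : ∑ U ∈ (Finset.univ : Finset (Fin r)).powerset,
      (-1 : ℝ) ^ U.card * (1 - (μ (Cov X (U.biUnion A) t)ᶜ).toReal)
      = ∑ U ∈ (Finset.univ : Finset (Fin r)).powerset, ((-1 : ℝ) ^ U.card
          + (-1 : ℝ) ^ (U.card + 1) * (μ (Cov X (U.biUnion A) t)ᶜ).toReal) :=
    Finset.sum_congr rfl fun U _ => by ring
  have hz : ∑ U ∈ (Finset.univ : Finset (Fin r)).powerset, (-1 : ℝ) ^ U.card = 0 := by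
    have h := Finset.sum_powerset_neg_one_pow_card_of_nonempty
      (Finset.univ_nonempty (α := Fin r))
    exact_mod_cast congrArg (fun z : ℤ => (z : ℝ)) h
  rw [step, Finset.sum_add_distrib, hz, zero_add]
  rw [← Finset.sum_filter_add_sum_filter_not
    (Finset.univ : Finset (Fin r)).powerset (fun U => U.Nonempty)
    (fun U => (-1 : ℝ) ^ (U.card + 1) * (μ (Cov X (U.biUnion A) t)ᶜ).toReal)]
  have hemp : (Finset.univ : Finset (Fin r)).powerset.filter (fun U => ¬ U.Nonempty)
      = {∅} := by
    ext U
    simp only [Finset.mem_filter, Finset.mem_powerset, Finset.not_nonempty_iff_eq_empty,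
      Finset.mem_singleton, and_iff_right_iff_imp]
    rintro rfl; exact Finset.empty_subset _
  rw [hemp, Finset.sum_singleton]
  have : Cov X ((∅ : Finset (Fin r)).biUnion A) t = Set.univ := by
    ext ω; simp [Cov]
  rw [this]
  simp

lemma collectTime_eq (B : Finset H) (ω : Ω) :
    collectTime X (↑B : Set H) ω = sInf {t | ω ∈ Cov X B t} := rfl

lemma measurable_collectTime (hmeas : ∀ t, Measurable (X t)) (B : Finset H) :
    Measurable (fun ω => collectTime X (↑B : Set H) ω) := by
  apply measurable_to_countable'
  intro n
  cases n with
  | zero =>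
    have hset : {ω | (fun ω => collectTime X (↑B : Set H) ω) ω = 0}
        = Cov X B 0 ∪ (⋂ t, (Cov X B t)ᶜ) := by
      ext ω
      simp only [Set.mem_setOf_eq, Set.mem_union, Set.mem_iInter, Set.mem_compl_iff]
      rw [collectTime_eq, Nat.sInf_eq_zero]
      constructor
      · rintro (h | h)
        · exact Or.inl h
        · refine Or.inr fun t hc => ?_
          have : t ∈ (∅ : Set ℕ) := h ▸ hc
          exact Set.notMem_empty t this
      · rintro (h | h)
        · exact Or.inl h
        · exact Or.inr (Set.eq_empty_iff_forall_notMem.mpr h)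
    show MeasurableSet {ω | (fun ω => collectTime X (↑B : Set H) ω) ω = 0}
    rw [hset]
    exact (measurableSet_cov hmeas B 0).union
      (MeasurableSet.iInter fun t => (measurableSet_cov hmeas B t).compl)
  | succ n =>
    have hset : {ω | (fun ω => collectTime X (↑B : Set H) ω) ω = n+1}
        = Cov X B (n+1) ∩ (Cov X B n)ᶜ := by
      ext ω
      simp only [Set.mem_setOf_eq, Set.mem_inter_iff, Set.mem_compl_iff]
      constructor
      · intro h
        rw [collectTime_eq] at h
        have hne : {t | ω ∈ Cov X B t}.Nonempty := by
          by_contra hc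
          rw [Set.not_nonempty_iff_eq_empty] at hc
          rw [hc, Nat.sInf_empty] at h
          omega
        have hmem := Nat.sInf_mem hne
        constructor
        · rw [← h]; exact hmem
        · intro hc
          have := Nat.sInf_le (s := {t | ω ∈ Cov X B t}) hc
          omega
      · rintro ⟨h1, h2⟩
        rw [collectTime_eq]
        have hle : sInf {t | ω ∈ Cov X B t} ≤ n + 1 := Nat.sInf_le h1
        have hgt : ¬ sInf {t | ω ∈ Cov X B t} ≤ n := by
          intro hc
          exact h2 (cov_mono B hc (Nat.sInf_mem (s := {t | ω ∈ Cov X B t}) ⟨n+1, h1⟩))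
        omega
    show MeasurableSet {ω | (fun ω => collectTime X (↑B : Set H) ω) ω = n+1}
    rw [hset]
    exact (measurableSet_cov hmeas B (n+1)).inter (measurableSet_cov hmeas B n).compl

lemma measurable_T (hmeas : ∀ t, Measurable (X t)) {r : ℕ} (hr : 0 < r)
    (A : Fin r → Finset H) :
    Measurable (fun ω => (⨅ i, collectTime X (↑(A i) : Set H) ω : ℕ)) := by
  haveI : Nonempty (Fin r) := ⟨⟨0, hr⟩⟩
  have h1 : Measurable (fun ω => (fun i => collectTime X (↑(A i) : Set H) ω)) :=
    measurable_pi_lambda _ fun i => measurable_collectTime hmeas (A i)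
  exact (measurable_of_countable (fun g : Fin r → ℕ => ⨅ i, g i)).comp h1

lemma lintegral_nat_eq_tsum (f : Ω → ℕ) (hf : Measurable f) :
    ∫⁻ ω, (f ω : ℝ≥0∞) ∂μ = ∑' t : ℕ, μ {ω | t < f ω} := by
  have hms : ∀ t : ℕ, MeasurableSet {ω | t < f ω} := by
    intro t
    exact hf (show MeasurableSet {n : ℕ | t < n} from trivial)
  have hpt : ∀ ω, ((f ω : ℝ≥0∞))
      = ∑' t : ℕ, Set.indicator {ω' | t < f ω'} (fun _ => (1 : ℝ≥0∞)) ω := by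
    intro ω
    have hzero : ∀ t ∉ Finset.range (f ω),
        Set.indicator {ω' | t < f ω'} (fun _ => (1 : ℝ≥0∞)) ω = 0 := by
      intro t ht
      apply Set.indicator_of_notMem
      simp only [Set.mem_setOf_eq, not_lt]
      exact Nat.le_of_not_lt fun hc => ht (Finset.mem_range.mpr hc)
    rw [tsum_eq_sum hzero]
    have hone : ∀ t ∈ Finset.range (f ω),
        Set.indicator {ω' | t < f ω'} (fun _ => (1 : ℝ≥0∞)) ω = 1 := by
      intro t ht
      exact Set.indicator_of_mem (by simpa using Finset.mem_range.mp ht) _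
    rw [Finset.sum_congr rfl hone]
    simp
  rw [lintegral_congr hpt, lintegral_tsum fun t =>
    ((measurable_const (a := (1:ℝ≥0∞))).indicator (hms t)).aemeasurable]
  exact tsum_congr fun t => lintegral_indicator_one (hms t)

lemma meas_never_cov (hN : 1 ≤ N) (hcard : Fintype.card H = N)
    (hmeas : ∀ t, Measurable (X t))
    (hindep : iIndepFun X μ)
    (hunif : ∀ t, ∀ c : H, μ {ω | X t ω = c} = (N : ENNReal)⁻¹)
    (B : Finset H) (hB : B.Nonempty) :
    μ (⋂ t, (Cov X B t)ᶜ) = 0 := by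
  have hN0 : (N : ℝ≥0∞) ≠ 0 := Nat.cast_ne_zero.mpr (by omega)
  have hNtop : (N : ℝ≥0∞) ≠ ⊤ := ENNReal.natCast_ne_top N
  have hbound : ∀ t, μ (⋂ t', (Cov X B t')ᶜ)
      ≤ (B.card : ℝ≥0∞) * ((((N-1 : ℕ)) : ℝ≥0∞) * (N : ℝ≥0∞)⁻¹) ^ t := by
    intro t
    have h1 : (⋂ t', (Cov X B t')ᶜ) ⊆ ⋃ b ∈ B, Avd X {b} t := by
      intro ω hω
      have hω' : ω ∉ Cov X B t := Set.mem_iInter.mp hω t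
      simp only [Cov, Set.mem_setOf_eq, not_forall] at hω'
      obtain ⟨b, hb, hnb⟩ := hω'
      refine Set.mem_biUnion hb ?_
      simp only [Avd, Set.mem_iInter, Set.mem_preimage, Finset.coe_compl, Set.mem_compl_iff,
        Finset.mem_coe, Finset.mem_singleton]
      intro s hs hc
      rw [Finset.mem_Icc] at hs
      exact hnb ⟨s, hs.1, hs.2, hc⟩
    calc μ (⋂ t', (Cov X B t')ᶜ) ≤ μ (⋃ b ∈ B, Avd X {b} t) := measure_mono h1
      _ ≤ ∑ b ∈ B, μ (Avd X {b} t) := measure_biUnion_finset_le B _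
      _ = (B.card : ℝ≥0∞) * ((((N-1 : ℕ)) : ℝ≥0∞) * (N : ℝ≥0∞)⁻¹) ^ t := by
          have hcardb : ∀ b : H, ({b}ᶜ : Finset H).card = N - 1 := by
            intro b; rw [Finset.card_compl, Finset.card_singleton, hcard]
          rw [Finset.sum_congr rfl fun b _ => by
            rw [meas_avd μ N hN hcard hmeas hindep hunif {b} t, hcardb b]]
          rw [Finset.sum_const, nsmul_eq_mul]
  have hρ : ((((N-1 : ℕ)) : ℝ≥0∞) * (N : ℝ≥0∞)⁻¹) < 1 := by
    calc (((N-1 : ℕ)) : ℝ≥0∞) * (N : ℝ≥0∞)⁻¹ < (N : ℝ≥0∞) * (N : ℝ≥0∞)⁻¹ := by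
          refine ENNReal.mul_lt_mul_left (ENNReal.inv_ne_zero.mpr hNtop)
            (ENNReal.inv_ne_top.mpr hN0) ?_
          exact_mod_cast (by omega : N - 1 < N)
      _ = 1 := ENNReal.mul_inv_cancel hN0 hNtop
  have htend : Filter.Tendsto
      (fun t : ℕ => (B.card : ℝ≥0∞) * ((((N-1 : ℕ)) : ℝ≥0∞) * (N : ℝ≥0∞)⁻¹) ^ t)
      Filter.atTop (nhds 0) := by
    have h := ENNReal.Tendsto.const_mul (a := (B.card : ℝ≥0∞))
      (ENNReal.tendsto_pow_atTop_nhds_zero_of_lt_one hρ)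
      (Or.inr (ENNReal.natCast_ne_top B.card))
    simpa using h
  have hle := ge_of_tendsto' htend hbound
  exact le_antisymm hle zero_le

lemma meas_lt_T (hN : 1 ≤ N) (hcard : Fintype.card H = N)
    (hmeas : ∀ t, Measurable (X t))
    (hindep : iIndepFun X μ)
    (hunif : ∀ t, ∀ c : H, μ {ω | X t ω = c} = (N : ENNReal)⁻¹)
    {r : ℕ} (hr : 0 < r) (A : Fin r → Finset H)
    (hA : ∀ i, (A i).Nonempty) (t : ℕ) :
    μ {ω | (t : ℕ) < ⨅ i, collectTime X (↑(A i) : Set H) ω}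
      = μ (⋂ i ∈ (Finset.univ : Finset (Fin r)), (Cov X (A i) t)ᶜ) := by
  haveI : Nonempty (Fin r) := ⟨⟨0, hr⟩⟩
  set Z := ⋃ i, ⋂ t', (Cov X (A i) t')ᶜ with hZdef
  have hZ0 : μ Z = 0 := measure_iUnion_null fun i =>
    meas_never_cov μ N hN hcard hmeas hindep hunif (A i) (hA i)
  have hsub1 : {ω | (t : ℕ) < ⨅ i, collectTime X (↑(A i) : Set H) ω}
      ⊆ ⋂ i ∈ (Finset.univ : Finset (Fin r)), (Cov X (A i) t)ᶜ := by
    intro ω hω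
    simp only [Set.mem_iInter, Set.mem_compl_iff]
    intro i _
    intro hc
    have h1 : collectTime X (↑(A i) : Set H) ω ≤ t := Nat.sInf_le hc
    have h2 : (⨅ j, collectTime X (↑(A j) : Set H) ω) ≤ collectTime X (↑(A i) : Set H) ω :=
      ciInf_le (OrderBot.bddBelow _) i
    have h3 : (t : ℕ) < ⨅ j, collectTime X (↑(A j) : Set H) ω := hω
    omega
  have hsub2 : (⋂ i ∈ (Finset.univ : Finset (Fin r)), (Cov X (A i) t)ᶜ)
      ⊆ {ω | (t : ℕ) < ⨅ i, collectTime X (↑(A i) : Set H) ω} ∪ Z := by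
    intro ω hω
    by_cases hz : ω ∈ Z
    · exact Or.inr hz
    · left
      have hωi : ∀ i, ω ∉ Cov X (A i) t := by
        intro i
        have := Set.mem_iInter.mp hω i
        have := Set.mem_iInter.mp this (Finset.mem_univ i)
        exact this
      have hiff : ∀ i, ∃ t', ω ∈ Cov X (A i) t' := by
        intro i
        by_contra hc
        push_neg at hc
        exact hz (Set.mem_iUnion.mpr ⟨i, Set.mem_iInter.mpr fun t' => hc t'⟩)
      have hlt : ∀ i, t < collectTime X (↑(A i) : Set H) ω := by
        intro i
        have hne : {t' | ω ∈ Cov X (A i) t'}.Nonempty := hiff i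
        by_contra hc
        push_neg at hc
        have hmem := Nat.sInf_mem (s := {t' | ω ∈ Cov X (A i) t'}) hne
        exact hωi i (cov_mono (A i) hc hmem)
      have hfin : t + 1 ≤ ⨅ i, collectTime X (↑(A i) : Set H) ω :=
        le_ciInf fun i => hlt i
      show (t : ℕ) < ⨅ i, collectTime X (↑(A i) : Set H) ω
      omega
  refine le_antisymm (measure_mono hsub1) ?_
  calc μ (⋂ i ∈ (Finset.univ : Finset (Fin r)), (Cov X (A i) t)ᶜ)
      ≤ μ ({ω | (t : ℕ) < ⨅ i, collectTime X (↑(A i) : Set H) ω} ∪ Z) :=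
        measure_mono hsub2
    _ ≤ μ {ω | (t : ℕ) < ⨅ i, collectTime X (↑(A i) : Set H) ω} + μ Z :=
        measure_union_le _ _
    _ = μ {ω | (t : ℕ) < ⨅ i, collectTime X (↑(A i) : Set H) ω} := by
        rw [hZ0, add_zero]

end CExp

/-- Average delay of first-to-complete alignment as an inclusion–exclusion sum of
harmonic numbers: for i.i.d. uniform draws from a finite set `H` of size `N ≥ 1` and
pairwise disjoint nonempty subsets `A₁, …, A_r` with `|A_i| = a_i`, the first time
`T = min_i σ_{A_i}` satisfies
`E[T] = N · ∑_{∅ ≠ U ⊆ {1,…,r}} (−1)^{1−|U|} · H_{∑_{i∈U} a_i}`. -/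
theorem expected_delay_first_to_complete_harmonic
    {Ω : Type*} [MeasurableSpace Ω] (μ : Measure Ω) [IsProbabilityMeasure μ]
    {H : Type*} [Fintype H] [MeasurableSpace H] [MeasurableSingletonClass H]
    (N : ℕ) (hN : 1 ≤ N) (hcard : Fintype.card H = N)
    (X : ℕ → Ω → H) (hmeas : ∀ t, Measurable (X t))
    (hindep : iIndepFun X μ)
    (hunif : ∀ t, ∀ c : H, μ {ω | X t ω = c} = (N : ENNReal)⁻¹)
    (r : ℕ) (hr : 0 < r) (A : Fin r → Finset H)
    (hA : ∀ i, (A i).Nonempty)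
    (hdisj : Pairwise fun i j => Disjoint (A i) (A j)) :
    ∫ ω, ((⨅ i, collectTime X (A i : Set H) ω : ℕ) : ℝ) ∂μ =
      N * ∑ U ∈ (Finset.univ : Finset (Fin r)).powerset.filter (fun U => U.Nonempty),
        (-1 : ℝ) ^ (U.card + 1) * harm (∑ i ∈ U, (A i).card) := by
  classical
  haveI : Nonempty (Fin r) := ⟨⟨0, hr⟩⟩
  have hTmeas : Measurable (fun ω => (⨅ i, collectTime X (A i : Set H) ω : ℕ)) :=
    CExp.measurable_T hmeas hr A
  have step1 : ∫ ω, ((⨅ i, collectTime X (A i : Set H) ω : ℕ) : ℝ) ∂μ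
      = (∫⁻ ω, ((⨅ i, collectTime X (A i : Set H) ω : ℕ) : ℝ≥0∞) ∂μ).toReal := by
    have h := integral_toReal (μ := μ)
      (f := fun ω => ((⨅ i, collectTime X (A i : Set H) ω : ℕ) : ℝ≥0∞))
      (((measurable_of_countable (fun n : ℕ => (n : ℝ≥0∞))).comp hTmeas).aemeasurable)
      (Filter.Eventually.of_forall fun ω =>
        lt_top_iff_ne_top.mpr (ENNReal.natCast_ne_top _))
    rw [← h]
    exact integral_congr_ae (Filter.Eventually.of_forall fun ω =>
      (ENNReal.toReal_natCast _).symm)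
  rw [step1, CExp.lintegral_nat_eq_tsum μ _ hTmeas]
  calc (∑' t : ℕ, μ {ω | t < ⨅ i, collectTime X (A i : Set H) ω}).toReal
      = (∑' t : ℕ,
          μ (⋂ i ∈ (Finset.univ : Finset (Fin r)), (CExp.Cov X (A i) t)ᶜ)).toReal := by
        rw [tsum_congr fun t => CExp.meas_lt_T μ N hN hcard hmeas hindep hunif hr A hA t]
    _ = ∑' t : ℕ,
          (μ (⋂ i ∈ (Finset.univ : Finset (Fin r)), (CExp.Cov X (A i) t)ᶜ)).toReal :=
        ENNReal.tsum_toReal_eq fun t => measure_ne_top μ _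
    _ = ∑' t : ℕ, ∑ U ∈ (Finset.univ : Finset (Fin r)).powerset.filter (fun U => U.Nonempty),
          (-1 : ℝ) ^ (U.card + 1) * (μ (CExp.Cov X (U.biUnion A) t)ᶜ).toReal :=
        tsum_congr fun t => CExp.meas_iInter_cov μ hmeas hr A t
    _ = ∑ U ∈ (Finset.univ : Finset (Fin r)).powerset.filter (fun U => U.Nonempty),
          ∑' t : ℕ, (-1 : ℝ) ^ (U.card + 1) * (μ (CExp.Cov X (U.biUnion A) t)ᶜ).toReal :=
        Summable.tsum_finsetSum fun U _ =>
          ((CExp.summable_cov_compl μ N hN hcard hmeas hindep hunif (U.biUnion A)).mul_left _)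
    _ = ∑ U ∈ (Finset.univ : Finset (Fin r)).powerset.filter (fun U => U.Nonempty),
          (-1 : ℝ) ^ (U.card + 1) * ((N : ℝ) * harm (∑ i ∈ U, (A i).card)) := by
        refine Finset.sum_congr rfl fun U _ => ?_
        rw [(CExp.summable_cov_compl μ N hN hcard hmeas hindep hunif
            (U.biUnion A)).tsum_mul_left,
          CExp.tsum_cov_compl μ N hN hcard hmeas hindep hunif (U.biUnion A),
          CExp.powerset_harm N (U.biUnion A),
          Finset.card_biUnion (fun i _ j _ hij => hdisj hij)]
    _ = N * ∑ U ∈ (Finset.univ : Finset (Fin r)).powerset.filter (fun U => U.Nonempty),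
          (-1 : ℝ) ^ (U.card + 1) * harm (∑ i ∈ U, (A i).card) := by
        rw [Finset.mul_sum]
        exact Finset.sum_congr rfl fun U _ => by ring
end

section
/- For any positive integers a₁, …, a_r, the following integral identity holds: ∫₀¹ (1/(1−u)) · ∏_{i=1}^{r} (1 − u^{a_i}) du = Σ_{∅ ≠ U ⊆ {1,…,r}} (−1)^{1−|U|} · H_{Σ_{i∈U} a_i}, where H_n = Σ_{j=1}^{n} 1/j is the n-th harmonic number. (The integrand extends continuously to u = 1, and the integral is finite.) -/
lemma prod_expand_ie (r : ℕ) (hr : 0 < r) (a : Fin r → ℕ) (u : ℝ) :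
    ∏ i, (1 - u ^ a i) =
      ∑ U ∈ (Finset.univ : Finset (Fin r)).powerset.filter (fun U => U.Nonempty),
        (-1 : ℝ) ^ (U.card + 1) * (1 - u ^ ∑ i ∈ U, a i) := by
  classical
  have key : ∏ i, (1 - u ^ a i)
      = ∑ U ∈ (Finset.univ : Finset (Fin r)).powerset,
          (-1 : ℝ) ^ U.card * u ^ (∑ i ∈ U, a i) := by
    have h1 : ∀ i ∈ (Finset.univ : Finset (Fin r)), (1 : ℝ) - u ^ a i = -(u ^ a i) + 1 := by
      intro i _; ring
    rw [Finset.prod_congr rfl h1, Finset.prod_add]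
    refine Finset.sum_congr rfl fun U _ => ?_
    rw [Finset.prod_const_one, mul_one]
    calc ∏ i ∈ U, -(u ^ a i) = ∏ i ∈ U, ((-1) * u ^ a i) := by simp
      _ = ((-1 : ℝ)) ^ U.card * u ^ ∑ i ∈ U, a i := by
          rw [Finset.prod_mul_distrib, Finset.prod_const, Finset.prod_pow_eq_pow_sum]
  have hsplit := Finset.sum_filter_add_sum_filter_not
    (Finset.univ : Finset (Fin r)).powerset (fun U => U.Nonempty)
    (fun U => (-1 : ℝ) ^ U.card * u ^ (∑ i ∈ U, a i))
  have hnot : (Finset.univ : Finset (Fin r)).powerset.filter (fun U => ¬ U.Nonempty)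
      = {∅} := by
    ext U
    simp [Finset.not_nonempty_iff_eq_empty]
  have hempty : ∑ U ∈ (Finset.univ : Finset (Fin r)).powerset.filter (fun U => ¬ U.Nonempty),
      (-1 : ℝ) ^ U.card * u ^ (∑ i ∈ U, a i) = 1 := by
    rw [hnot]; simp
  have hsign : ∑ U ∈ (Finset.univ : Finset (Fin r)).powerset.filter (fun U => U.Nonempty),
      (-1 : ℝ) ^ U.card = -1 := by
    haveI : Nonempty (Fin r) := Fin.pos_iff_nonempty.mp hr
    have hZ := Finset.sum_powerset_neg_one_pow_card_of_nonempty
      (x := (Finset.univ : Finset (Fin r)))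
      (Finset.univ_nonempty (α := Fin r))
    have hR : ∑ U ∈ (Finset.univ : Finset (Fin r)).powerset, (-1 : ℝ) ^ U.card = 0 := by
      have := congrArg (fun z : ℤ => (z : ℝ)) hZ
      push_cast at this
      simpa using this
    have hs2 := Finset.sum_filter_add_sum_filter_not
      (Finset.univ : Finset (Fin r)).powerset (fun U => U.Nonempty)
      (fun U => (-1 : ℝ) ^ U.card)
    have hnotsum : ∑ U ∈ (Finset.univ : Finset (Fin r)).powerset.filter (fun U => ¬ U.Nonempty),
        (-1 : ℝ) ^ U.card = 1 := by rw [hnot]; simp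
    linarith [hs2.trans hR, hnotsum]
  calc ∏ i, (1 - u ^ a i)
      = ∑ U ∈ (Finset.univ : Finset (Fin r)).powerset,
          (-1 : ℝ) ^ U.card * u ^ (∑ i ∈ U, a i) := key
    _ = ∑ U ∈ (Finset.univ : Finset (Fin r)).powerset.filter (fun U => U.Nonempty),
          (-1 : ℝ) ^ U.card * u ^ (∑ i ∈ U, a i) + 1 := by rw [← hsplit, hempty]
    _ = ∑ U ∈ (Finset.univ : Finset (Fin r)).powerset.filter (fun U => U.Nonempty),
        (-1 : ℝ) ^ (U.card + 1) * (1 - u ^ ∑ i ∈ U, a i) := by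
        rw [Finset.sum_congr rfl (fun U _ => show ((-1 : ℝ)) ^ (U.card + 1) * (1 - u ^ ∑ i ∈ U, a i)
            = (-1 : ℝ) ^ U.card * u ^ (∑ i ∈ U, a i) + (-1) * ((-1 : ℝ) ^ U.card) by ring),
          Finset.sum_add_distrib, ← Finset.mul_sum, hsign]
        ring

/-- For any positive integers `a₁, …, a_r`,
`∫₀¹ (1/(1−u)) · ∏_i (1 − u^{a_i}) du
  = ∑_{∅ ≠ U ⊆ {1,…,r}} (−1)^{1−|U|} · H_{∑_{i∈U} a_i}`,
where `H_n` is the `n`-th harmonic number.  (The integrand extends continuously to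
`u = 1`, and the integral is finite.) -/
theorem integral_eq_inclusion_exclusion_harmonic
    (r : ℕ) (hr : 0 < r) (a : Fin r → ℕ) (ha : ∀ i, 0 < a i) :
    ∫ u in (0 : ℝ)..1, (1 / (1 - u)) * ∏ i, (1 - u ^ a i) =
      ∑ U ∈ (Finset.univ : Finset (Fin r)).powerset.filter (fun U => U.Nonempty),
        (-1 : ℝ) ^ (U.card + 1) * harm (∑ i ∈ U, a i) := by
  classical
  set P := (Finset.univ : Finset (Fin r)).powerset.filter (fun U => U.Nonempty) with hP
  set g : ℝ → ℝ := fun u => ∑ U ∈ P,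
      (-1 : ℝ) ^ (U.card + 1) * ∑ j ∈ Finset.range (∑ i ∈ U, a i), u ^ j with hg
  have hcong : ∫ u in (0 : ℝ)..1, (1 / (1 - u)) * ∏ i, (1 - u ^ a i)
      = ∫ u in (0 : ℝ)..1, g u := by
    apply intervalIntegral.integral_congr_ae
    have h1 : ∀ᵐ x : ℝ, x ≠ 1 := by
      rw [MeasureTheory.ae_iff]
      have : {x : ℝ | ¬ x ≠ 1} = {1} := by ext x; simp
      rw [this]
      exact Real.volume_singleton
    filter_upwards [h1] with x hx _
    rw [prod_expand_ie r hr a x, Finset.mul_sum, hg]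
    refine Finset.sum_congr rfl fun U _ => ?_
    rw [geom_sum_eq hx]
    have hx' : (1 : ℝ) - x ≠ 0 := sub_ne_zero.mpr (Ne.symm hx)
    have hx2 : x - 1 ≠ 0 := sub_ne_zero.mpr hx
    field_simp
    ring
  rw [hcong, hg]
  rw [intervalIntegral.integral_finset_sum]
  · refine Finset.sum_congr rfl fun U _ => ?_
    rw [intervalIntegral.integral_const_mul, intervalIntegral.integral_finset_sum]
    · congr 1
      rw [harm]
      refine Finset.sum_congr rfl fun j _ => ?_
      rw [integral_pow]
      rw [one_pow, zero_pow (Nat.succ_ne_zero j)]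
      push_cast
      ring
    · intro j _
      exact (continuous_pow j).intervalIntegrable 0 1
  · intro U _
    exact (continuous_const.mul
      (continuous_finset_sum _ fun j _ => continuous_pow j)).intervalIntegrable 0 1
end

section
/- Let H be a finite set, let (X_t)_{t≥1} be i.i.d. uniform draws from H, and let A, B ⊆ H be disjoint nonempty subsets. Then the probability that A is completely collected strictly before B is P(σ_A < σ_B) = |B| / (|A| + |B|). (In the first-to-complete scheme with two disjoint alignment sets of sizes m₁ and m₂, the probability of decoding via the size-m₁ set is (m₂ − 1)/((m₁ − 1) + (m₂ − 1)); e.g. for sizes (2,4) this gives 3/4 and 1/4, for (4,6) it gives 5/8 and 3/8, and for (4,8) it gives 7/10 and 3/10.) -/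
open MeasureTheory ProbabilityTheory

namespace CollectAux

variable {Ω H : Type*}

/-- `c` appears among `X_1, …, X_t`. -/
def App (X : ℕ → Ω → H) (c : H) (t : ℕ) (ω : Ω) : Prop :=
  ∃ s, 1 ≤ s ∧ s ≤ t ∧ X s ω = c

/-- `c` eventually appears. -/
def Ev (X : ℕ → Ω → H) (c : H) (ω : Ω) : Prop := ∃ s, 1 ≤ s ∧ X s ω = c

/-- first occurrence time of `c`. -/
noncomputable def fT (X : ℕ → Ω → H) (c : H) (ω : Ω) : ℕ :=
  sInf {s | 1 ≤ s ∧ X s ω = c}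

/-- event: all of `S` eventually appear. -/
def G (X : ℕ → Ω → H) (S : Finset H) : Set Ω := {ω | ∀ c ∈ S, Ev X c ω}

/-- event: `b` is the last element of `S` to appear (and all of `S` appears). -/
def E (X : ℕ → Ω → H) (S : Finset H) (b : H) : Set Ω :=
  {ω | Ev X b ω ∧ ∀ c ∈ S, c ≠ b → Ev X c ω ∧ fT X c ω < fT X b ω}

/-- event: `b` first appears at time `t` and all other members of `S` appeared before. -/
def D (X : ℕ → Ω → H) (S : Finset H) (b : H) (t : ℕ) : Set Ω :=
  {ω | X t ω = b ∧ ¬ App X b (t-1) ω ∧ ∀ c ∈ S, c ≠ b → App X c (t-1) ω}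

/-- tuple version of first `t` draws (times `1,…,t`). -/
def Vec (X : ℕ → Ω → H) (t : ℕ) (ω : Ω) : Fin t → H :=
  fun i => X ((i : ℕ) + 1) ω

/-- tuple-level appearance before time `k`. -/
def appT {m : ℕ} (y : Fin m → H) (c : H) (k : ℕ) : Prop :=
  ∃ i : Fin m, (i : ℕ) + 1 ≤ k ∧ y i = c

/-- tuple-level version of `D` at time `t+1`. -/
def QD (S : Finset H) (b : H) (t : ℕ) (y : Fin (t+1) → H) : Prop :=
  y (Fin.last t) = b ∧ ¬ appT y b t ∧ ∀ c ∈ S, c ≠ b → appT y c t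

instance [DecidableEq H] {m : ℕ} (y : Fin m → H) (c : H) (k : ℕ) :
    Decidable (appT y c k) := by unfold appT; infer_instance

instance [DecidableEq H] (S : Finset H) (b : H) (t : ℕ)
    (y : Fin (t+1) → H) : Decidable (QD S b t y) := by unfold QD; infer_instance

section Deterministic

variable {X : ℕ → Ω → H} {b c : H} {t : ℕ} {ω : Ω}

lemma fT_mem (h : Ev X c ω) : 1 ≤ fT X c ω ∧ X (fT X c ω) ω = c :=
  Nat.sInf_mem h

lemma app_iff : App X c t ω ↔ Ev X c ω ∧ fT X c ω ≤ t := by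
  constructor
  · rintro ⟨s, h1, h2, h3⟩
    exact ⟨⟨s, h1, h3⟩, le_trans (Nat.sInf_le ⟨h1, h3⟩) h2⟩
  · rintro ⟨h, hle⟩
    obtain ⟨h1, h2⟩ := fT_mem h
    exact ⟨_, h1, hle, h2⟩

lemma fT_ne (hb : Ev X b ω) (hc : Ev X c ω) (hne : b ≠ c) :
    fT X b ω ≠ fT X c ω := by
  intro h
  obtain ⟨_, h2⟩ := fT_mem hb
  obtain ⟨_, h4⟩ := fT_mem hc
  rw [h, h4] at h2
  exact hne h2.symm

lemma collectTime_eq_sup (A : Finset H) (hA : ∀ a ∈ A, Ev X a ω) :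
    collectTime X (A : Set H) ω = A.sup (fun a => fT X a ω) := by
  have : {t : ℕ | ∀ a ∈ (A : Set H), ∃ s, 1 ≤ s ∧ s ≤ t ∧ X s ω = a}
      = Set.Ici (A.sup (fun a => fT X a ω)) := by
    ext t
    simp only [Set.mem_setOf_eq, Set.mem_Ici, Finset.sup_le_iff]
    constructor
    · intro h a ha
      exact (app_iff.1 (h a ha)).2
    · intro h a ha
      exact app_iff.2 ⟨hA a ha, h a ha⟩
  rw [collectTime, this, csInf_Ici]

lemma E_subset_G {S : Finset H} (hb : b ∈ S) : E X S b ⊆ G X S := by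
  rintro ω ⟨h1, h2⟩ c hc
  by_cases hcb : c = b
  · exact hcb ▸ h1
  · exact (h2 c hc hcb).1

lemma G_subset_iUnion (S : Finset H) (hS : S.Nonempty) :
    G X S ⊆ ⋃ b ∈ S, E X S b := by
  intro ω hω
  obtain ⟨b, hb, hsup⟩ := Finset.exists_mem_eq_sup S hS (fun c => fT X c ω)
  refine Set.mem_iUnion₂.2 ⟨b, hb, hω b hb, fun c hc hcb => ⟨hω c hc, ?_⟩⟩
  have hle : fT X c ω ≤ fT X b ω := hsup ▸ Finset.le_sup (f := fun c => fT X c ω) hc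
  exact lt_of_le_of_ne hle (fT_ne (hω c hc) (hω b hb) hcb)

lemma E_disjoint {S : Finset H} (hb : b ∈ S) (hc : c ∈ S) (hne : b ≠ c) :
    Disjoint (E X S b) (E X S c) := by
  rw [Set.disjoint_left]
  rintro ω ⟨_, h1⟩ ⟨_, h2⟩
  exact absurd ((h1 c hc (Ne.symm hne)).2.trans (h2 b hb hne).2) (lt_irrefl _)

lemma target_inter [DecidableEq H] (A B : Finset H) (hA : A.Nonempty) (hB : B.Nonempty)
    (hAB : Disjoint A B) :
    {ω | collectTime X (A : Set H) ω < collectTime X (B : Set H) ω} ∩ G X (A ∪ B)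
      = ⋃ b ∈ B, E X (A ∪ B) b := by
  ext ω
  simp only [Set.mem_inter_iff, Set.mem_setOf_eq, Set.mem_iUnion₂]
  constructor
  · rintro ⟨hlt, hG⟩
    obtain ⟨b, hb, hsup⟩ := Finset.exists_mem_eq_sup B hB (fun c => fT X c ω)
    have hGb : ∀ c ∈ B, Ev X c ω := fun c hc => hG c (Finset.mem_union_right _ hc)
    have hGa : ∀ c ∈ A, Ev X c ω := fun c hc => hG c (Finset.mem_union_left _ hc)
    refine ⟨b, hb, hGb b hb, fun c hc hcb => ?_⟩
    rcases Finset.mem_union.1 hc with h | h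
    · refine ⟨hGa c h, ?_⟩
      calc fT X c ω ≤ A.sup (fun a => fT X a ω) := Finset.le_sup (f := fun a => fT X a ω) h
        _ < B.sup (fun a => fT X a ω) := by
            rw [← collectTime_eq_sup A hGa, ← collectTime_eq_sup B hGb]; exact hlt
        _ = fT X b ω := hsup
    · exact ⟨hGb c h,
        lt_of_le_of_ne (hsup ▸ Finset.le_sup (f := fun c => fT X c ω) h)
          (fT_ne (hGb c h) (hGb b hb) hcb)⟩
  · rintro ⟨b, hb, hEb⟩
    have hG : ω ∈ G X (A ∪ B) := E_subset_G (Finset.mem_union_right _ hb) hEb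
    have hGb : ∀ c ∈ B, Ev X c ω := fun c hc => hG c (Finset.mem_union_right _ hc)
    have hGa : ∀ c ∈ A, Ev X c ω := fun c hc => hG c (Finset.mem_union_left _ hc)
    refine ⟨?_, hG⟩
    rw [collectTime_eq_sup A hGa, collectTime_eq_sup B hGb]
    have h1 : A.sup (fun a => fT X a ω) < fT X b ω := by
      rw [Finset.sup_lt_iff (lt_of_lt_of_le Nat.one_pos (fT_mem hEb.1).1)]
      intro a ha
      exact (hEb.2 a (Finset.mem_union_left _ ha)
        (fun h => Finset.disjoint_left.1 hAB (h ▸ ha) hb)).2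
    exact lt_of_lt_of_le h1 (Finset.le_sup (f := fun a => fT X a ω) hb)

lemma E_eq_iUnion_D (S : Finset H) (b : H) :
    E X S b = ⋃ t, D X S b (t+1) := by
  ext ω
  simp only [Set.mem_iUnion, E, D, Set.mem_setOf_eq]
  constructor
  · rintro ⟨hEv, h⟩
    obtain ⟨h1, h2⟩ := fT_mem hEv
    refine ⟨fT X b ω - 1, ?_⟩
    have hfr : fT X b ω - 1 + 1 = fT X b ω := by omega
    rw [hfr]
    refine ⟨h2, ?_, ?_⟩
    · intro happ
      have := (app_iff.1 happ).2
      omega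
    · intro c hc hcb
      exact app_iff.2 ⟨(h c hc hcb).1, by have := (h c hc hcb).2; omega⟩
  · rintro ⟨t, hXt, hnapp, h⟩
    have hEv : Ev X b ω := ⟨t+1, by omega, hXt⟩
    have hfT : fT X b ω = t+1 := by
      have hle : fT X b ω ≤ t+1 := Nat.sInf_le ⟨by omega, hXt⟩
      rcases Nat.lt_or_ge (fT X b ω) (t+1) with hlt | hge
      · exact absurd (app_iff.2 ⟨hEv, (show fT X b ω ≤ t by omega)⟩) (by simpa using hnapp)
      · omega
    refine ⟨hEv, fun c hc hcb => ?_⟩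
    obtain ⟨hEvc, hlec⟩ := app_iff.1 (h c hc hcb)
    simp only [Nat.add_sub_cancel] at hlec
    exact ⟨hEvc, by omega⟩

lemma D_disjoint (S : Finset H) (b : H) {t t' : ℕ} (ht : 1 ≤ t) (ht' : 1 ≤ t')
    (hne : t ≠ t') : Disjoint (D X S b t) (D X S b t') := by
  rw [Set.disjoint_left]
  rintro ω ⟨hXt, hnapp, _⟩ ⟨hXt', hnapp', _⟩
  rcases Nat.lt_or_ge t t' with h | h
  · exact hnapp' ⟨t, ht, by omega, hXt⟩
  · exact hnapp ⟨t', ht', by omega, hXt'⟩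

end Deterministic

section Measure

variable [MeasurableSpace Ω] {μ : Measure Ω} [IsProbabilityMeasure μ]
  [Fintype H] [MeasurableSpace H] [MeasurableSingletonClass H] [DecidableEq H]
  {X : ℕ → Ω → H} (hmeas : ∀ t, Measurable (X t))
  (hindep : iIndepFun X μ)
  (hunif : ∀ t, ∀ c : H, μ {ω | X t ω = c} = (Fintype.card H : ENNReal)⁻¹)

include hmeas in
lemma measurableSet_eq_const (s : ℕ) (c : H) : MeasurableSet {ω | X s ω = c} :=
  (hmeas s) (measurableSet_singleton c)

include hmeas in
lemma measurableSet_app (c : H) (t : ℕ) : MeasurableSet {ω | App X c t ω} := by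
  have : {ω | App X c t ω} = ⋃ s, ⋃ (_ : 1 ≤ s ∧ s ≤ t), {ω | X s ω = c} := by
    ext ω; simp [App]; tauto
  rw [this]
  exact MeasurableSet.iUnion fun s => MeasurableSet.iUnion fun _ =>
    measurableSet_eq_const hmeas s c

include hmeas in
lemma measurableSet_D (S : Finset H) (b : H) (t : ℕ) :
    MeasurableSet (D X S b t) := by
  have : D X S b t = {ω | X t ω = b} ∩ ({ω | App X b (t-1) ω}ᶜ
      ∩ ⋂ c, ⋂ (_ : c ∈ S ∧ c ≠ b), {ω | App X c (t-1) ω}) := by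
    ext ω
    simp only [D, Set.mem_setOf_eq, Set.mem_inter_iff, Set.mem_compl_iff, Set.mem_iInter]
    tauto
  rw [this]
  exact (measurableSet_eq_const hmeas t b).inter
    ((measurableSet_app hmeas b (t-1)).compl.inter
      (MeasurableSet.iInter fun c => MeasurableSet.iInter fun _ =>
        measurableSet_app hmeas c (t-1)))

include hmeas in
lemma measurableSet_E (S : Finset H) (b : H) : MeasurableSet (E X S b) := by
  rw [E_eq_iUnion_D]
  exact MeasurableSet.iUnion fun t => measurableSet_D hmeas S b (t+1)

include hindep hunif in
lemma meas_iInter_eq (u : Finset ℕ) (g : ℕ → H) :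
    μ (⋂ s ∈ u, {ω | X s ω = g s}) = (Fintype.card H : ENNReal)⁻¹ ^ u.card := by
  have h := hindep.measure_inter_preimage_eq_mul u
    (sets := fun s => {g s}) (fun i _ => measurableSet_singleton _)
  have heq : (⋂ s ∈ u, {ω | X s ω = g s}) = ⋂ s ∈ u, X s ⁻¹' {g s} := by
    ext ω; simp [Set.mem_preimage]
  rw [heq, h]
  exact (Finset.prod_congr rfl fun s _ => hunif s (g s)).trans (Finset.prod_const _)

include hmeas hindep hunif in
lemma meas_never_eq_zero (c : H) :
    μ {ω | ¬ Ev X c ω} = 0 := by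
  set n : ENNReal := (Fintype.card H : ENNReal) with hn
  have hinvpos : 0 < n⁻¹ := ENNReal.inv_pos.2 (by simp [hn])
  have hlt : (1 : ENNReal) - n⁻¹ < 1 :=
    ENNReal.sub_lt_self ENNReal.one_ne_top one_ne_zero (ne_of_gt hinvpos)
  have hbound : ∀ t : ℕ, μ {ω | ¬ Ev X c ω} ≤ (1 - n⁻¹) ^ t := by
    intro t
    have hsub : {ω | ¬ Ev X c ω} ⊆ ⋂ s ∈ Finset.Icc 1 t, X s ⁻¹' ({c}ᶜ) := by
      intro ω hω
      simp only [Set.mem_iInter, Set.mem_preimage, Set.mem_compl_iff,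
        Set.mem_singleton_iff, Finset.mem_Icc]
      intro s hs hXs
      exact hω ⟨s, hs.1, hXs⟩
    refine le_trans (measure_mono hsub) ?_
    have h := hindep.measure_inter_preimage_eq_mul (Finset.Icc 1 t)
      (sets := fun _ => ({c}ᶜ : Set H))
      (fun i _ => (measurableSet_singleton c).compl)
    rw [h]
    have hcompl : ∀ s : ℕ, μ (X s ⁻¹' ({c}ᶜ : Set H)) = 1 - n⁻¹ := by
      intro s
      have : X s ⁻¹' ({c}ᶜ : Set H) = {ω | X s ω = c}ᶜ := by
        ext ω; simp
      rw [this, measure_compl (measurableSet_eq_const hmeas s c) (measure_ne_top μ _),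
        hunif s c, measure_univ]
    rw [Finset.prod_congr rfl (fun s _ => hcompl s), Finset.prod_const,
      Nat.card_Icc]
    simp
  have htends : Filter.Tendsto (fun t : ℕ => (1 - n⁻¹) ^ t) Filter.atTop (nhds 0) :=
    ENNReal.tendsto_pow_atTop_nhds_zero_of_lt_one hlt
  exact le_antisymm (ge_of_tendsto' htends hbound) zero_le

include hmeas hindep hunif in
lemma meas_G_compl (S : Finset H) : μ (G X S)ᶜ = 0 := by
  have hsub : (G X S)ᶜ ⊆ ⋃ c ∈ S, {ω | ¬ Ev X c ω} := by
    intro ω hω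
    simp only [G, Set.mem_compl_iff, Set.mem_setOf_eq, not_forall] at hω
    obtain ⟨c, hc, h⟩ := hω
    exact Set.mem_biUnion hc h
  refine le_antisymm (le_trans (measure_mono hsub) ?_) zero_le
  rw [show (0 : ENNReal) = ∑ c ∈ S, 0 by simp]
  refine le_trans (measure_biUnion_finset_le S _) ?_
  exact Finset.sum_le_sum fun c _ => le_of_eq (meas_never_eq_zero hmeas hindep hunif c)

include hindep hunif in
lemma meas_vec_eq (d : H) (t : ℕ) (y : Fin t → H) :
    μ {ω | Vec X t ω = y} = (Fintype.card H : ENNReal)⁻¹ ^ t := by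
  have hset : {ω | Vec X t ω = y}
      = ⋂ s ∈ Finset.Icc 1 t,
          {ω | X s ω = (fun s => if h : s - 1 < t then y ⟨s-1, h⟩ else d) s} := by
    ext ω
    simp only [Set.mem_setOf_eq, Set.mem_iInter, Finset.mem_Icc, funext_iff, Vec]
    constructor
    · rintro h s ⟨h1, h2⟩
      have hlt : s - 1 < t := by omega
      rw [dif_pos hlt]
      have := h ⟨s-1, hlt⟩
      simpa [Nat.sub_add_cancel h1] using this
    · intro h i
      have := h ((i:ℕ)+1) ⟨by omega, by omega⟩
      rw [dif_pos (by omega : (i:ℕ)+1-1 < t)] at this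
      simpa using this
  rw [hset, meas_iInter_eq hindep hunif, Nat.card_Icc]
  simp

include hmeas in
lemma measurableSet_vec_fiber (t : ℕ) (y : Fin t → H) :
    MeasurableSet {ω | Vec X t ω = y} := by
  have : {ω | Vec X t ω = y} = ⋂ i : Fin t, {ω | X ((i:ℕ)+1) ω = y i} := by
    ext ω; simp [Vec, funext_iff]
  rw [this]
  exact MeasurableSet.iInter fun i => (hmeas _) (measurableSet_singleton _)

include hmeas hindep hunif in
lemma meas_vec_mem (d : H) (t : ℕ) (F : Finset (Fin t → H)) :
    μ {ω | Vec X t ω ∈ F} = F.card * (Fintype.card H : ENNReal)⁻¹ ^ t := by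
  have hU : {ω | Vec X t ω ∈ F} = ⋃ y ∈ F, {ω | Vec X t ω = y} := by
    ext ω; simp
  rw [hU, measure_biUnion_finset ?_ (fun y _ => measurableSet_vec_fiber hmeas t y)]
  · rw [Finset.sum_congr rfl (fun y _ => meas_vec_eq hindep hunif d t y),
      Finset.sum_const, nsmul_eq_mul]
  · intro y _ y' _ hne
    rw [Function.onFun, Set.disjoint_left]
    rintro ω h1 h2
    exact hne ((h1 : _ = y).symm.trans h2)

lemma D_eq_vec (S : Finset H) (b : H) (t : ℕ) :
    D X S b (t+1) = {ω | Vec X (t+1) ω ∈ Finset.univ.filter (QD S b t)} := by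
  have happ : ∀ c (ω : Ω), App X c t ω ↔ appT (Vec X (t+1) ω) c t := by
    intro c ω
    constructor
    · rintro ⟨s, h1, h2, h3⟩
      exact ⟨⟨s-1, by omega⟩, (show s - 1 + 1 ≤ t by omega),
        by simpa [Vec, Nat.sub_add_cancel h1] using h3⟩
    · rintro ⟨i, h1, h2⟩
      exact ⟨(i:ℕ)+1, by omega, by omega, h2⟩
  ext ω
  simp only [D, QD, Set.mem_setOf_eq, Finset.mem_filter, Finset.mem_univ, true_and,
    Nat.add_sub_cancel]
  constructor
  · rintro ⟨h1, h2, h3⟩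
    exact ⟨h1, fun h => h2 ((happ b ω).2 h), fun c hc hcb => (happ c ω).1 (h3 c hc hcb)⟩
  · rintro ⟨h1, h2, h3⟩
    exact ⟨h1, fun h => h2 ((happ b ω).1 h), fun c hc hcb => (happ c ω).2 (h3 c hc hcb)⟩

lemma QD_swap {S : Finset H} {b b' : H} (hb : b ∈ S) (hb' : b' ∈ S) (t : ℕ)
    {y : Fin (t+1) → H} (h : QD S b t y) : QD S b' t (Equiv.swap b b' ∘ y) := by
  obtain ⟨h1, h2, h3⟩ := h
  have hswap : ∀ (c : H) (k : ℕ),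
      appT (Equiv.swap b b' ∘ y) c k ↔ appT y (Equiv.swap b b' c) k := by
    intro c k
    constructor
    · rintro ⟨i, hik, hi⟩
      exact ⟨i, hik, by rw [← hi]; simp [Function.comp, Equiv.swap_apply_self]⟩
    · rintro ⟨i, hik, hi⟩
      exact ⟨i, hik, by rw [Function.comp_apply, hi, Equiv.swap_apply_self]⟩
  refine ⟨by simp [Function.comp_apply, h1, Equiv.swap_apply_left], ?_, ?_⟩
  · rw [hswap, Equiv.swap_apply_right]
    exact h2
  · intro c hc hcb'
    rw [hswap]
    have hmem : Equiv.swap b b' c ∈ S := by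
      rcases eq_or_ne c b with rfl | h
      · simpa [Equiv.swap_apply_left] using hb'
      · rcases eq_or_ne c b' with rfl | h'
        · simpa [Equiv.swap_apply_right] using hb
        · rwa [Equiv.swap_apply_of_ne_of_ne h h']
    have hne : Equiv.swap b b' c ≠ b := by
      intro hcon
      apply hcb'
      have := congrArg (Equiv.swap b b') hcon
      rwa [Equiv.swap_apply_self, Equiv.swap_apply_left] at this
    exact h3 _ hmem hne

lemma card_QD_eq {S : Finset H} {b b' : H} (hb : b ∈ S) (hb' : b' ∈ S) (t : ℕ) :
    (Finset.univ.filter (QD S b t)).card = (Finset.univ.filter (QD S b' t)).card := by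
  refine Finset.card_bij' (fun y _ => Equiv.swap b b' ∘ y) (fun y _ => Equiv.swap b b' ∘ y)
    ?_ ?_ ?_ ?_
  · intro y hy
    simp only [Finset.mem_filter, Finset.mem_univ, true_and] at hy ⊢
    exact QD_swap hb hb' t hy
  · intro y hy
    simp only [Finset.mem_filter, Finset.mem_univ, true_and] at hy ⊢
    simpa [Equiv.swap_comm b' b] using QD_swap hb' hb t hy
  · intro y _
    funext i; simp [Function.comp, Equiv.swap_apply_self]
  · intro y _
    funext i; simp [Function.comp, Equiv.swap_apply_self]

include hmeas hindep hunif in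
lemma meas_E (d : H) (S : Finset H) (b : H) :
    μ (E X S b) = ∑' t : ℕ, ((Finset.univ.filter (QD S b t)).card
      * (Fintype.card H : ENNReal)⁻¹ ^ (t+1)) := by
  rw [E_eq_iUnion_D, measure_iUnion ?_ (fun t => measurableSet_D hmeas S b (t+1))]
  · exact tsum_congr fun t => by
      rw [D_eq_vec, meas_vec_mem hmeas hindep hunif d]
  · intro t t' hne
    exact D_disjoint S b (by omega) (by omega) (by omega)

include hmeas hindep hunif in
lemma meas_E_eq (d : H) {S : Finset H} {b b' : H} (hb : b ∈ S) (hb' : b' ∈ S) :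
    μ (E X S b) = μ (E X S b') := by
  rw [meas_E hmeas hindep hunif d, meas_E hmeas hindep hunif d]
  exact tsum_congr fun t => by rw [card_QD_eq hb hb' t]

end Measure

end CollectAux

/-- For i.i.d. uniform draws from a finite set `H` and disjoint nonempty subsets
`A, B ⊆ H`, the probability that `A` is completely collected strictly before `B` is
`P(σ_A < σ_B) = |B| / (|A| + |B|)`.  (In the first-to-complete scheme with two disjoint
alignment sets of sizes `m₁` and `m₂` this gives, with `|A| = m₁ − 1` and `|B| = m₂ − 1`,
the decoding probability `(m₂−1)/((m₁−1)+(m₂−1))`.) -/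
theorem prob_collect_first_of_disjoint
    {Ω : Type*} [MeasurableSpace Ω] (μ : Measure Ω) [IsProbabilityMeasure μ]
    {H : Type*} [Fintype H] [MeasurableSpace H] [MeasurableSingletonClass H]
    (X : ℕ → Ω → H) (hmeas : ∀ t, Measurable (X t))
    (hindep : iIndepFun X μ)
    (hunif : ∀ t, ∀ c : H, μ {ω | X t ω = c} = (Fintype.card H : ENNReal)⁻¹)
    (A B : Finset H) (hA : A.Nonempty) (hB : B.Nonempty) (hAB : Disjoint A B) :
    μ {ω | collectTime X (A : Set H) ω < collectTime X (B : Set H) ω} =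
      (B.card : ENNReal) / ((A.card : ENNReal) + (B.card : ENNReal)) := by
  classical
  obtain ⟨d, hd⟩ := hA
  open CollectAux in
  set S : Finset H := A ∪ B with hS
  have hSne : S.Nonempty := ⟨d, Finset.mem_union_left _ hd⟩
  -- common value of μ (E X S b)
  have hGc : μ (CollectAux.G X S)ᶜ = 0 :=
    CollectAux.meas_G_compl hmeas hindep hunif S
  have hG1 : μ (CollectAux.G X S) = 1 := by
    refine le_antisymm prob_le_one ?_
    calc (1 : ENNReal)
        = μ (CollectAux.G X S ∪ (CollectAux.G X S)ᶜ) := by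
          rw [Set.union_compl_self, measure_univ]
      _ ≤ μ (CollectAux.G X S) + μ (CollectAux.G X S)ᶜ := measure_union_le _ _
      _ = μ (CollectAux.G X S) := by rw [hGc, add_zero]
  -- the events E b, b ∈ S, partition G up to measure
  have hGeq : CollectAux.G X S = ⋃ b ∈ S, CollectAux.E X S b :=
    Set.Subset.antisymm (CollectAux.G_subset_iUnion S hSne)
      (Set.iUnion₂_subset fun b hb => CollectAux.E_subset_G hb)
  have hpair : (↑S : Set H).Pairwise (Function.onFun Disjoint (CollectAux.E X S)) :=
    fun b hb b' hb' hne => CollectAux.E_disjoint hb hb' hne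
  have hsum : ∑ b ∈ S, μ (CollectAux.E X S b) = 1 := by
    rw [← measure_biUnion_finset hpair
      (fun b _ => CollectAux.measurableSet_E hmeas S b), ← hGeq, hG1]
  -- all E b, b ∈ S, have the same measure, hence each has measure (S.card)⁻¹
  obtain ⟨b₀, hb₀⟩ := hSne
  have hp : ∀ b ∈ S, μ (CollectAux.E X S b) = μ (CollectAux.E X S b₀) :=
    fun b hb => CollectAux.meas_E_eq hmeas hindep hunif d hb hb₀
  have hcard0 : (S.card : ENNReal) ≠ 0 := Nat.cast_ne_zero.2 (Finset.card_ne_zero_of_mem (Finset.mem_union_left _ hd))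
  have hcardtop : (S.card : ENNReal) ≠ ⊤ := ENNReal.natCast_ne_top _
  have hsum' : (S.card : ENNReal) * μ (CollectAux.E X S b₀) = 1 := by
    rw [← hsum, Finset.sum_congr rfl hp, Finset.sum_const, nsmul_eq_mul]
  have hp0 : μ (CollectAux.E X S b₀) = (S.card : ENNReal)⁻¹ := by
    calc μ (CollectAux.E X S b₀)
        = (S.card : ENNReal)⁻¹ * ((S.card : ENNReal) * μ (CollectAux.E X S b₀)) := by
          rw [← mul_assoc, ENNReal.inv_mul_cancel hcard0 hcardtop, one_mul]
      _ = (S.card : ENNReal)⁻¹ := by rw [hsum', mul_one]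
  -- compute the target measure
  have htarget : μ {ω | collectTime X (A : Set H) ω < collectTime X (B : Set H) ω}
      = ∑ b ∈ B, μ (CollectAux.E X S b) := by
    rw [← measure_inter_conull hGc,
      CollectAux.target_inter A B ⟨d, hd⟩ hB hAB,
      measure_biUnion_finset ?_ (fun b _ => CollectAux.measurableSet_E hmeas S b)]
    exact fun b hb b' hb' hne =>
      CollectAux.E_disjoint (Finset.mem_union_right _ hb) (Finset.mem_union_right _ hb') hne
  have hcardS : (S.card : ENNReal) = (A.card : ENNReal) + (B.card : ENNReal) := by
    rw [hS, Finset.card_union_of_disjoint hAB]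
    push_cast
    ring
  rw [htarget,
    Finset.sum_congr rfl (fun b hb => (hp b (Finset.mem_union_right _ hb)).trans hp0),
    Finset.sum_const, nsmul_eq_mul, ← hcardS, ENNReal.div_eq_inv_mul, mul_comm]
end
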